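/- arXiv:2410.09798 — 4 statements merged into one kernel-verified Lean document; each statement's English description precedes it below -/
import Mathlib

section
/- Let λ be a partition of n and ς = (s_1,…,s_d) a composition of n. The set CSYT^λ_ς of column-strict Young tableaux of shape λ and content ς is nonempty if and only if λ ⊵ ς^ord in dominance order, and the set RSYT^λ_ς of row-strict Young tableaux of shape λ and content ς is nonempty if and only if λ̄ ⊵ ς^ord, where λ̄ is the transpose partition of λ. -/
open scoped Classical

noncomputable section

/-- A filling is *row-strict* if its entries strictly increase along each row
(cells `(i,j)` with fixed row index `i`) and weakly increase down each column. -/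
def RowStrictFilling (cells : Finset (ℕ × ℕ)) (F : ℕ × ℕ → ℕ) : Prop :=
  (∀ c ∈ cells, ∀ c' ∈ cells, c.1 = c'.1 → c.2 < c'.2 → F c < F c') ∧
  (∀ c ∈ cells, ∀ c' ∈ cells, c.2 = c'.2 → c.1 < c'.1 → F c ≤ F c')

/-- A filling is *column-strict* if its entries weakly increase along each row
and strictly increase down each column. -/
def ColStrictFilling (cells : Finset (ℕ × ℕ)) (F : ℕ × ℕ → ℕ) : Prop :=
  (∀ c ∈ cells, ∀ c' ∈ cells, c.1 = c'.1 → c.2 < c'.2 → F c ≤ F c') ∧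
  (∀ c ∈ cells, ∀ c' ∈ cells, c.2 = c'.2 → c.1 < c'.1 → F c < F c')

/-- A filling has content `ς = (s_1, …, s_d)` if the entry `k` occurs exactly `s k`
times, for each `k ∈ {1, …, d}`. -/
def HasContent (d : ℕ) (s : ℕ → ℕ) (cells : Finset (ℕ × ℕ)) (F : ℕ × ℕ → ℕ) : Prop :=
  ∀ k ∈ Finset.Icc 1 d, (cells.filter fun c => F c = k).card = s k

/-- Normalization: a filling vanishes outside the cells of the diagram. -/
def ZeroOff (cells : Finset (ℕ × ℕ)) (F : ℕ × ℕ → ℕ) : Prop :=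
  ∀ c, c ∉ cells → F c = 0

/-- The set `RSYT^λ_ς` of row-strict Young tableaux of shape with cells `cells`
and content `ς`. -/
def RSYTset (d : ℕ) (s : ℕ → ℕ) (cells : Finset (ℕ × ℕ)) : Set (ℕ × ℕ → ℕ) :=
  {F | RowStrictFilling cells F ∧ HasContent d s cells F ∧ ZeroOff cells F}

/-- The set `CSYT^λ_ς` of column-strict Young tableaux of shape with cells `cells`
and content `ς`. -/
def CSYTset (d : ℕ) (s : ℕ → ℕ) (cells : Finset (ℕ × ℕ)) : Set (ℕ × ℕ → ℕ) :=
  {F | ColStrictFilling cells F ∧ HasContent d s cells F ∧ ZeroOff cells F}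

/-- Dominance order: `a ⊵ b` iff all partial sums of `a` dominate those of `b`. -/
def Dominates (a b : ℕ → ℕ) : Prop :=
  ∀ i, ∑ j ∈ Finset.range i, b j ≤ ∑ j ∈ Finset.range i, a j

/-- `ς^ord`: the composition `(s 1, …, s d)` rearranged in decreasing order,
read as a function `ℕ → ℕ` (0-indexed, extended by zeros). -/
def sOrd (d : ℕ) (s : ℕ → ℕ) : ℕ → ℕ :=
  fun i => (((List.range' 1 d).map s).insertionSort fun a b => b ≤ a).getD i 0


lemma aux_take_sum_succ (l : List ℕ) (i : ℕ) :
    (l.take (i+1)).sum = (l.take i).sum + l.getD i 0 := by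
  rcases lt_or_ge i l.length with h | h
  · rw [List.take_succ, List.sum_append, List.getD_eq_getElem _ _ h]
    simp [List.getElem?_eq_getElem h]
  · rw [List.take_of_length_le h, List.take_of_length_le (le_trans h (Nat.le_succ i)),
      List.getD_eq_default _ _ h]
    simp

lemma aux_sum_range_getD (l : List ℕ) (i : ℕ) :
    ∑ j ∈ Finset.range i, l.getD j 0 = (l.take i).sum := by
  induction i with
  | zero => simp
  | succ n ih => rw [Finset.sum_range_succ, ih, aux_take_sum_succ]

def sList (d : ℕ) (s : ℕ → ℕ) : List ℕ :=
  ((List.range' 1 d).map s).insertionSort fun a b => b ≤ a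

lemma sOrd_eq (d : ℕ) (s : ℕ → ℕ) (i : ℕ) : sOrd d s i = (sList d s).getD i 0 := rfl

instance : IsTotal ℕ (fun a b => b ≤ a) := ⟨fun a b => le_total b a⟩
instance : IsTrans ℕ (fun a b => b ≤ a) := ⟨fun _ _ _ h1 h2 => le_trans h2 h1⟩
instance : IsAntisymm ℕ (fun a b => b ≤ a) := ⟨fun _ _ h1 h2 => le_antisymm h2 h1⟩

lemma sList_sorted (d : ℕ) (s : ℕ → ℕ) : (sList d s).Pairwise fun a b => b ≤ a :=
  List.pairwise_insertionSort _ _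

lemma sList_perm (d : ℕ) (s : ℕ → ℕ) : (sList d s).Perm ((List.range' 1 d).map s) :=
  List.perm_insertionSort _ _

lemma sList_length (d : ℕ) (s : ℕ → ℕ) : (sList d s).length = d := by
  rw [(sList_perm d s).length_eq]; simp

lemma sorted_getD_anti {l : List ℕ} (hl : l.Pairwise fun a b => b ≤ a) {i j : ℕ} (h : i ≤ j) :
    l.getD j 0 ≤ l.getD i 0 := by
  rcases lt_or_ge j l.length with hj | hj
  · have hi : i < l.length := lt_of_le_of_lt h hj
    rw [List.getD_eq_getElem _ _ hj, List.getD_eq_getElem _ _ hi]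
    rcases eq_or_lt_of_le h with rfl | hlt
    · exact le_refl _
    · exact (List.pairwise_iff_getElem.mp hl) i j hi hj hlt
  · rw [List.getD_eq_default _ _ hj]; exact Nat.zero_le _

lemma sList_succ_perm (d : ℕ) (s : ℕ → ℕ) :
    (sList (d+1) s).Perm (s (d+1) :: sList d s) := by
  refine (sList_perm (d+1) s).trans ?_
  have : List.range' 1 (d+1) = List.range' 1 d ++ [1 + d] := List.range'_1_concat
  rw [this, List.map_append]
  refine (List.perm_append_singleton _ _).trans ?_
  have : (1:ℕ) + d = d + 1 := Nat.add_comm 1 d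
  rw [this]
  exact List.Perm.cons _ (sList_perm d s).symm

lemma erase_of_sorted_perm {m m' : List ℕ} {c : ℕ}
    (hm : m.Pairwise fun a b => b ≤ a) (hm' : m'.Pairwise fun a b => b ≤ a)
    (hp : m.Perm (c :: m')) : m' = m.erase c := by
  refine List.Perm.eq_of_pairwise' hm' (hm.sublist (List.erase_sublist (a := c) (l := m))) ?_
  have := hp.erase c
  rw [List.erase_cons_head] at this
  exact this.symm

lemma prefix_sums_of_erase {m m' : List ℕ} {c : ℕ}
    (hm : m.Pairwise fun a b => b ≤ a) (hc : c ∈ m) (hm' : m' = m.erase c) :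
    ∃ p < m.length, (∀ i ≤ p, c ≤ m.getD i 0) ∧ (∀ i, p < i → m.getD i 0 ≤ c) ∧
      (∀ i ≤ p, (m'.take i).sum = (m.take i).sum) ∧
      (∀ i, p < i → (m'.take i).sum + c = (m.take (i+1)).sum) := by
  obtain ⟨A, B, -, hAB, hErase⟩ := List.exists_erase_eq hc
  subst hAB
  refine ⟨A.length, by simp, ?_, ?_, ?_, ?_⟩
  · have hp : (A ++ c :: B).getD A.length 0 = c := by
      rw [List.getD_eq_getElem _ _ (by simp)]
      simp [List.getElem_append_right (le_refl A.length)]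
    intro i hi
    calc c = (A ++ c :: B).getD A.length 0 := hp.symm
    _ ≤ _ := sorted_getD_anti hm hi
  · have hp : (A ++ c :: B).getD A.length 0 = c := by
      rw [List.getD_eq_getElem _ _ (by simp)]
      simp [List.getElem_append_right (le_refl A.length)]
    intro i hi
    calc (A ++ c :: B).getD i 0 ≤ (A ++ c :: B).getD A.length 0 :=
          sorted_getD_anti hm (le_of_lt hi)
    _ = c := hp
  · intro i hi
    rw [hm', hErase, List.take_append, List.take_append,
      Nat.sub_eq_zero_of_le hi, List.take_zero, List.take_zero]
  · intro i hi
    have h1 : A.length ≤ i := le_of_lt hi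
    rw [hm', hErase, List.take_append, List.take_append,
      List.take_of_length_le h1, List.take_of_length_le (le_trans h1 (Nat.le_succ i))]
    have : i + 1 - A.length = (i - A.length) + 1 := by omega
    rw [this, List.take_cons]
    · simp [Nat.add_comm, Nat.add_assoc, Nat.add_left_comm]
    · omega

lemma yd_fst_lt_card (μ : YoungDiagram) {c : ℕ × ℕ} (hc : c ∈ μ.cells) : c.1 < μ.card := by
  have hsub : (Finset.range (c.1 + 1)).image (fun i => (i, c.2)) ⊆ μ.cells := by
    intro x hx
    simp only [Finset.mem_image, Finset.mem_range] at hx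
    obtain ⟨i, hi, rfl⟩ := hx
    exact μ.up_left_mem (Nat.lt_succ_iff.mp hi) (le_refl _) (μ.mem_cells _ |>.mp hc)
  have hcard : ((Finset.range (c.1 + 1)).image (fun i => (i, c.2))).card = c.1 + 1 := by
    rw [Finset.card_image_of_injective _ (fun a b hab => (Prod.mk.injEq _ _ _ _).mp hab |>.1)]
    simp
  have h2 := Finset.card_le_card hsub
  have h3 : μ.card = μ.cells.card := rfl
  omega

lemma yd_card_filter_fst_lt (μ : YoungDiagram) (i : ℕ) :
    (μ.cells.filter fun c => c.1 < i).card = ∑ r ∈ Finset.range i, μ.rowLen r := by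
  rw [Finset.card_eq_sum_card_fiberwise (f := Prod.fst) (t := Finset.range i)
    (fun x hx => Finset.mem_range.mpr (Finset.mem_filter.mp hx).2)]
  refine Finset.sum_congr rfl fun r hr => ?_
  rw [YoungDiagram.rowLen_eq_card]
  congr 1
  ext c
  simp only [Finset.mem_filter, YoungDiagram.row, Finset.mem_range] at *
  constructor
  · rintro ⟨⟨h1, h2⟩, h3⟩; exact ⟨h1, h3⟩
  · rintro ⟨h1, h3⟩; exact ⟨⟨h1, h3 ▸ hr⟩, h3⟩

lemma yd_card_eq_sum_rowLen (μ : YoungDiagram) (R : ℕ) (hR : ∀ c ∈ μ.cells, c.1 < R) :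
    μ.card = ∑ r ∈ Finset.range R, μ.rowLen r := by
  rw [← yd_card_filter_fst_lt, Finset.filter_eq_self.mpr hR]

lemma yd_card_filter_col (μ : YoungDiagram) (m j : ℕ) :
    (μ.cells.filter fun c => c.1 < m ∧ c.2 = j).card = min m (μ.colLen j) := by
  have : (μ.cells.filter fun c => c.1 < m ∧ c.2 = j) =
      (Finset.range (min m (μ.colLen j))).image fun r => (r, j) := by
    ext ⟨a, b⟩
    simp only [Finset.mem_filter, Finset.mem_image, Finset.mem_range, YoungDiagram.mem_cells,
      lt_min_iff]
    constructor
    · rintro ⟨h1, h2, rfl⟩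
      exact ⟨a, ⟨h2, YoungDiagram.mem_iff_lt_colLen.mp h1⟩, rfl⟩
    · rintro ⟨r, ⟨hr1, hr2⟩, h⟩
      obtain ⟨rfl, rfl⟩ := Prod.mk.injEq _ _ _ _ |>.mp h
      exact ⟨YoungDiagram.mem_iff_lt_colLen.mpr hr2, hr1, rfl⟩
  rw [this, Finset.card_image_of_injective _ (fun a b hab => (Prod.mk.injEq _ _ _ _).mp hab |>.1)]
  simp


lemma values_mem (d : ℕ) (s : ℕ → ℕ) (A : Finset (ℕ × ℕ)) (F : ℕ × ℕ → ℕ)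
    (h : HasContent d s A F) (hc : A.card = ∑ k ∈ Finset.Icc 1 d, s k) :
    ∀ x ∈ A, F x ∈ Finset.Icc 1 d := by
  classical
  have hB : A.filter (fun c => F c ∈ Finset.Icc 1 d) =
      (Finset.Icc 1 d).biUnion fun k => A.filter fun c => F c = k := by
    ext x
    simp only [Finset.mem_filter, Finset.mem_biUnion]
    constructor
    · rintro ⟨hx, hFx⟩; exact ⟨F x, hFx, hx, rfl⟩
    · rintro ⟨k, hk, hx, rfl⟩; exact ⟨hx, hk⟩
  have hdisj : ∀ x ∈ Finset.Icc 1 d, ∀ y ∈ Finset.Icc 1 d, x ≠ y →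
      Disjoint (A.filter fun c => F c = x) (A.filter fun c => F c = y) := by
    intro x _ y _ hxy
    refine Finset.disjoint_left.mpr fun a ha hb => ?_
    have h1 := (Finset.mem_filter.mp ha).2
    have h2 := (Finset.mem_filter.mp hb).2
    exact hxy (h1 ▸ h2 ▸ rfl)
  have hcard : (A.filter fun c => F c ∈ Finset.Icc 1 d).card = A.card := by
    rw [hB, Finset.card_biUnion hdisj, hc]
    exact Finset.sum_congr rfl fun k hk => h k hk
  have heq := Finset.eq_of_subset_of_card_le (Finset.filter_subset _ A) (le_of_eq hcard.symm)
  intro x hx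
  rw [← heq] at hx
  exact (Finset.mem_filter.mp hx).2

/-- Sum of filter over a subset of values. -/
lemma card_filter_mem (s : ℕ → ℕ) (A : Finset (ℕ × ℕ)) (F : ℕ × ℕ → ℕ) (K : Finset ℕ)
    (h : ∀ k ∈ K, (A.filter fun c => F c = k).card = s k) :
    (A.filter fun c => F c ∈ K).card = ∑ k ∈ K, s k := by
  classical
  have hB : A.filter (fun c => F c ∈ K) = K.biUnion fun k => A.filter fun c => F c = k := by
    ext x
    simp only [Finset.mem_filter, Finset.mem_biUnion]
    constructor
    · rintro ⟨hx, hFx⟩; exact ⟨F x, hFx, hx, rfl⟩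
    · rintro ⟨k, hk, hx, rfl⟩; exact ⟨hx, hk⟩
  have hdisj : ∀ x ∈ K, ∀ y ∈ K, x ≠ y →
      Disjoint (A.filter fun c => F c = x) (A.filter fun c => F c = y) := by
    intro x _ y _ hxy
    refine Finset.disjoint_left.mpr fun a ha hb => ?_
    have h1 := (Finset.mem_filter.mp ha).2
    have h2 := (Finset.mem_filter.mp hb).2
    exact hxy (h1 ▸ h2 ▸ rfl)
  rw [hB, Finset.card_biUnion hdisj]
  exact Finset.sum_congr rfl fun k hk => h k hk

/-- There is a subset of `{1,…,d}` whose `s`-values sum to the `i`-th prefix sum of `ς^ord`. -/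
lemma exists_K (d : ℕ) (s : ℕ → ℕ) (i : ℕ) :
    ∃ K : Finset ℕ, K ⊆ Finset.Icc 1 d ∧ K.card = min i d ∧
      ∑ k ∈ K, s k = ((sList d s).take i).sum := by
  have hsub : ((sList d s).take i).Subperm ((List.range' 1 d).map s) :=
    ((List.take_sublist i _).subperm).trans (sList_perm d s).subperm
  obtain ⟨l, hl1, hl2⟩ := hsub
  obtain ⟨u, hu1, rfl⟩ := List.sublist_map_iff.mp hl2
  have hnodup : u.Nodup := hu1.nodup (List.nodup_range' (s := 1) (n := d))
  refine ⟨u.toFinset, ?_, ?_, ?_⟩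
  · intro x hx
    have := hu1.subset (List.mem_toFinset.mp hx)
    rw [List.mem_range'_1] at this
    exact Finset.mem_Icc.mpr ⟨this.1, by omega⟩
  · have hlen := hl1.length_eq
    rw [List.length_map, List.length_take, sList_length] at hlen
    rw [List.toFinset_card_of_nodup hnodup, hlen]
  · rw [List.sum_toFinset _ hnodup]; exact hl1.sum_eq


/-- Forward direction for column-strict tableaux. -/
lemma csyt_forward (d : ℕ) (s : ℕ → ℕ) (μ : YoungDiagram)
    (hsum : μ.card = ∑ k ∈ Finset.Icc 1 d, s k)
    (hne : (CSYTset d s μ.cells).Nonempty) :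
    Dominates (fun i => μ.rowLen i) (sOrd d s) := by
  classical
  obtain ⟨F, hCS, hcont, -⟩ := hne
  intro i
  have hL : ∑ j ∈ Finset.range i, sOrd d s j = ((sList d s).take i).sum := by
    simp only [sOrd_eq]; exact aux_sum_range_getD _ i
  rw [hL]
  obtain ⟨K, hK1, hK2, hK3⟩ := exists_K d s i
  rw [← hK3]
  have hKi : K.card ≤ i := by rw [hK2]; exact min_le_left _ _
  -- the set of cells with entries in K
  set A := μ.cells.filter fun c => F c ∈ K with hA
  have hcardA : A.card = ∑ k ∈ K, s k :=
    card_filter_mem s μ.cells F K fun k hk => hcont k (hK1 hk)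
  set J := μ.rowLen 0 with hJ
  have hsndlt : ∀ x ∈ μ.cells, x.2 < J := by
    intro x hx
    have : (0, x.2) ∈ μ := μ.up_left_mem (Nat.zero_le _) (le_refl _) ((μ.mem_cells _).mp hx)
    exact YoungDiagram.mem_iff_lt_rowLen.mp this
  -- fiberwise over columns
  have hAcard : A.card = ∑ j ∈ Finset.range J, (A.filter fun c => c.2 = j).card :=
    Finset.card_eq_sum_card_fiberwise (f := Prod.snd)
      (fun x hx => Finset.mem_range.mpr (hsndlt x (Finset.mem_filter.mp hx).1))
  have hBcard : (μ.cells.filter fun c => c.1 < K.card).card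
      = ∑ j ∈ Finset.range J, ((μ.cells.filter fun c => c.1 < K.card).filter
          fun c => c.2 = j).card :=
    Finset.card_eq_sum_card_fiberwise (f := Prod.snd)
      (fun x hx => Finset.mem_range.mpr (hsndlt x (Finset.mem_filter.mp hx).1))
  have hcol : ∀ j, (A.filter fun c => c.2 = j).card ≤ min K.card (μ.colLen j) := by
    intro j
    refine le_min ?_ ?_
    · refine Finset.card_le_card_of_injOn F ?_ ?_
      · intro a ha
        simp only [hA, Finset.mem_filter, Finset.mem_coe] at ha
        exact ha.1.2
      · intro x hx y hy hxy
        simp only [Finset.coe_filter, Set.mem_setOf_eq, hA, Finset.mem_filter,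
          Finset.mem_coe] at hx hy
        obtain ⟨⟨hx1, -⟩, hx2⟩ := hx
        obtain ⟨⟨hy1, -⟩, hy2⟩ := hy
        rcases lt_trichotomy x.1 y.1 with h | h | h
        · exact absurd hxy (ne_of_lt (hCS.2 x hx1 y hy1 (hx2.trans hy2.symm) h))
        · exact Prod.ext h (hx2.trans hy2.symm)
        · exact absurd hxy.symm (ne_of_lt (hCS.2 y hy1 x hx1 (hy2.trans hx2.symm) h))
    · rw [YoungDiagram.colLen_eq_card]
      refine Finset.card_le_card ?_
      intro x hx
      simp only [hA, Finset.mem_filter] at hx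
      rw [YoungDiagram.mem_col_iff]
      exact ⟨(μ.mem_cells _).mp hx.1.1, hx.2⟩
  have step : A.card ≤ (μ.cells.filter fun c => c.1 < K.card).card := by
    rw [hAcard, hBcard]
    refine Finset.sum_le_sum fun j _ => ?_
    refine le_trans (hcol j) (le_of_eq ?_)
    rw [Finset.filter_filter, ← yd_card_filter_col μ K.card j]
  calc ∑ k ∈ K, s k = A.card := hcardA.symm
    _ ≤ (μ.cells.filter fun c => c.1 < K.card).card := step
    _ = ∑ r ∈ Finset.range K.card, μ.rowLen r := yd_card_filter_fst_lt μ K.card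
    _ ≤ ∑ r ∈ Finset.range i, μ.rowLen r :=
        Finset.sum_le_sum_of_subset (Finset.range_subset_range.mpr hKi)

-- STRIP SECTION (to be appended; assumes earlier parts)

/-- Row lengths after removing a horizontal strip of size `c` greedily from the bottom. -/
def stripFun (μ : YoungDiagram) (c : ℕ) : ℕ → ℕ :=
  fun r => (μ.rowLen r - c) + min c (μ.rowLen (r + 1))

lemma stripFun_le (μ : YoungDiagram) (c r : ℕ) : stripFun μ c r ≤ μ.rowLen r := by
  have := μ.rowLen_anti r (r + 1) (Nat.le_succ r)
  unfold stripFun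
  omega

lemma stripFun_ge (μ : YoungDiagram) (c r : ℕ) : μ.rowLen (r + 1) ≤ stripFun μ c r := by
  have := μ.rowLen_anti r (r + 1) (Nat.le_succ r)
  unfold stripFun
  omega

lemma stripFun_anti (μ : YoungDiagram) (c : ℕ) : Antitone (stripFun μ c) := by
  refine antitone_nat_of_succ_le fun r => ?_
  exact le_trans (stripFun_le μ c (r + 1)) (stripFun_ge μ c r)

/-- The diagram obtained by removing a horizontal strip of size `c` from `μ`,
keeping rows as full as possible from the top. -/
def stripSub (μ : YoungDiagram) (c : ℕ) : YoungDiagram where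
  cells := μ.cells.filter fun x => x.2 < stripFun μ c x.1
  isLowerSet := by
    intro x y hxy hx
    simp only [Finset.coe_filter, Set.mem_setOf_eq, YoungDiagram.mem_cells] at hx ⊢
    obtain ⟨h1, h2⟩ := hx
    refine ⟨μ.isLowerSet hxy h1, ?_⟩
    calc y.2 ≤ x.2 := hxy.2
      _ < stripFun μ c x.1 := h2
      _ ≤ stripFun μ c y.1 := stripFun_anti μ c hxy.1

lemma mem_stripSub {μ : YoungDiagram} {c : ℕ} {x : ℕ × ℕ} :
    x ∈ (stripSub μ c).cells ↔ x.2 < stripFun μ c x.1 := by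
  simp only [stripSub, Finset.mem_filter, YoungDiagram.mem_cells]
  constructor
  · rintro ⟨-, h⟩; exact h
  · intro h
    refine ⟨?_, h⟩
    have : x.2 < μ.rowLen x.1 := lt_of_lt_of_le h (stripFun_le μ c x.1)
    exact YoungDiagram.mem_iff_lt_rowLen.mpr (by exact this)

lemma stripSub_subset (μ : YoungDiagram) (c : ℕ) : (stripSub μ c).cells ⊆ μ.cells :=
  Finset.filter_subset _ _

lemma rowLen_stripSub (μ : YoungDiagram) (c r : ℕ) :
    (stripSub μ c).rowLen r = stripFun μ c r := by
  refine Nat.le_antisymm ?_ ?_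
  · by_contra h
    push_neg at h
    have : (r, stripFun μ c r) ∈ stripSub μ c := YoungDiagram.mem_iff_lt_rowLen.mpr h
    have := mem_stripSub.mp ((stripSub μ c).mem_cells _ |>.mpr this)
    simp at this
  · rcases Nat.eq_zero_or_pos (stripFun μ c r) with h0 | h0
    · simp [h0]
    · have hmem : (r, stripFun μ c r - 1) ∈ (stripSub μ c).cells :=
        mem_stripSub.mpr (by simp; omega)
      have := YoungDiagram.mem_iff_lt_rowLen.mp (((stripSub μ c).mem_cells _).mp hmem)
      omega

lemma stripSub_prefix (μ : YoungDiagram) (c : ℕ) (hc : c ≤ μ.rowLen 0) (i : ℕ) :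
    ∑ r ∈ Finset.range i, stripFun μ c r + c
      = ∑ r ∈ Finset.range i, μ.rowLen r + min c (μ.rowLen i) := by
  induction i with
  | zero => simp [Nat.min_eq_left hc]
  | succ n ih =>
    rw [Finset.sum_range_succ, Finset.sum_range_succ]
    have hstep : min c (μ.rowLen n) + stripFun μ c n
        = μ.rowLen n + min c (μ.rowLen (n + 1)) := by
      unfold stripFun
      omega
    omega

lemma rowLen_card_zero (μ : YoungDiagram) : μ.rowLen μ.card = 0 := by
  by_contra h
  have : (μ.card, 0) ∈ μ := YoungDiagram.mem_iff_lt_rowLen.mpr (Nat.pos_of_ne_zero h)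
  have := yd_fst_lt_card μ ((μ.mem_cells _).mpr this)
  simp at this

lemma stripSub_card (μ : YoungDiagram) (c : ℕ) (hc : c ≤ μ.rowLen 0) :
    (stripSub μ c).card + c = μ.card := by
  set R := μ.card with hR
  have h1 : μ.card = ∑ r ∈ Finset.range R, μ.rowLen r :=
    yd_card_eq_sum_rowLen μ R fun x hx => yd_fst_lt_card μ hx
  have h2 : (stripSub μ c).card = ∑ r ∈ Finset.range R, (stripSub μ c).rowLen r :=
    yd_card_eq_sum_rowLen _ R fun x hx => yd_fst_lt_card μ (stripSub_subset μ c hx)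
  have h3 := stripSub_prefix μ c hc R
  rw [rowLen_card_zero μ] at h3
  simp only [Nat.min_zero, Nat.add_zero] at h3
  have h4 : ∑ r ∈ Finset.range R, (stripSub μ c).rowLen r
      = ∑ r ∈ Finset.range R, stripFun μ c r :=
    Finset.sum_congr rfl fun r _ => rowLen_stripSub μ c r
  omega


/-- Backward direction: dominance implies existence of a column-strict tableau. -/
lemma csyt_exists : ∀ (d : ℕ) (s : ℕ → ℕ) (μ : YoungDiagram),
    μ.card = ∑ k ∈ Finset.Icc 1 d, s k →
    Dominates (fun i => μ.rowLen i) (sOrd d s) →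
    (CSYTset d s μ.cells).Nonempty := by
  intro d
  induction d with
  | zero =>
    intro s μ hcard _
    have h0 : μ.cells.card = 0 := by simpa using hcard
    have hcells : μ.cells = ∅ := Finset.card_eq_zero.mp h0
    refine ⟨fun _ => 0, ⟨?_, ?_⟩, ?_, ?_⟩
    · intro x hx; rw [hcells] at hx; exact absurd hx (Finset.notMem_empty x)
    · intro x hx; rw [hcells] at hx; exact absurd hx (Finset.notMem_empty x)
    · intro k hk; simp at hk
    · intro x _; rfl
  | succ d ih =>
    intro s μ hcard hdom
    set c := s (d + 1) with hcdef
    have hsorted : (sList (d+1) s).Pairwise fun a b => b ≤ a := sList_sorted _ _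
    have hperm : (sList (d+1) s).Perm (c :: sList d s) := sList_succ_perm d s
    have hcmem : c ∈ sList (d+1) s := hperm.mem_iff.mpr List.mem_cons_self
    have herase : sList d s = (sList (d+1) s).erase c :=
      erase_of_sorted_perm hsorted (sList_sorted _ _) hperm
    obtain ⟨p, hp, hgd1, hgd2, hpre1, hpre2⟩ := prefix_sums_of_erase hsorted hcmem herase
    have hM : ∀ j, ((sList (d+1) s).take j).sum ≤ ∑ r ∈ Finset.range j, μ.rowLen r := by
      intro j
      have h := hdom j
      simp only [sOrd_eq] at h
      rwa [aux_sum_range_getD] at h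
    have hc0 : c ≤ μ.rowLen 0 := by
      have h1 := hgd1 0 (Nat.zero_le p)
      have h2 := hM 1
      have h3 := aux_take_sum_succ (sList (d+1) s) 0
      simp only [List.take_zero, List.sum_nil, Nat.zero_add] at h3
      rw [h3, Finset.sum_range_one] at h2
      omega
    set ν := stripSub μ c with hνdef
    have hνsub : ν.cells ⊆ μ.cells := stripSub_subset μ c
    have hνcard : ν.card + c = μ.card := stripSub_card μ c hc0
    have hsum' : ∑ k ∈ Finset.Icc 1 (d+1), s k = ∑ k ∈ Finset.Icc 1 d, s k + c :=
      Finset.sum_Icc_succ_top (Nat.le_add_left 1 d) s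
    have hνcard' : ν.card = ∑ k ∈ Finset.Icc 1 d, s k := by omega
    have hdom' : Dominates (fun i => ν.rowLen i) (sOrd d s) := by
      intro i
      have hLHS : ∑ j ∈ Finset.range i, sOrd d s j = ((sList d s).take i).sum := by
        simp only [sOrd_eq]; exact aux_sum_range_getD _ i
      have hRHS : ∑ r ∈ Finset.range i, ν.rowLen r = ∑ r ∈ Finset.range i, stripFun μ c r :=
        Finset.sum_congr rfl fun r _ => rowLen_stripSub μ c r
      show ∑ j ∈ Finset.range i, sOrd d s j ≤ ∑ r ∈ Finset.range i, ν.rowLen r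
      rw [hLHS, hRHS]
      have hPsum := stripSub_prefix μ c hc0 i
      have hMi := hM i
      have hMi1 := hM (i + 1)
      have hMsucc := aux_take_sum_succ (sList (d+1) s) i
      have hPsucc : ∑ r ∈ Finset.range (i+1), μ.rowLen r
          = ∑ r ∈ Finset.range i, μ.rowLen r + μ.rowLen i := Finset.sum_range_succ _ i
      rcases le_or_gt i p with hip | hip
      · have h1 := hpre1 i hip
        have h2 := hgd1 i hip
        omega
      · have h1 := hpre2 i hip
        have h2 := hgd2 i hip
        omega
    obtain ⟨F', hF'mem⟩ := ih s ν hνcard' hdom'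
    obtain ⟨hCS', hcont', hzero'⟩ := hF'mem
    classical
    set F : ℕ × ℕ → ℕ := fun x => if x ∈ μ.cells ∧ x ∉ ν.cells then d + 1 else F' x with hFdef
    have hvals : ∀ x ∈ ν.cells, F' x ∈ Finset.Icc 1 d := values_mem d s ν.cells F' hcont' hνcard'
    have hFν : ∀ x ∈ ν.cells, F x = F' x := by
      intro x hx
      simp only [hFdef]
      exact if_neg fun h => h.2 hx
    have hFstrip : ∀ x ∈ μ.cells, x ∉ ν.cells → F x = d + 1 := by
      intro x hx hxn
      simp only [hFdef]
      exact if_pos ⟨hx, hxn⟩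
    have hFle : ∀ x ∈ ν.cells, F x ≤ d := by
      intro x hx
      rw [hFν x hx]
      exact (Finset.mem_Icc.mp (hvals x hx)).2
    have hstripcol : ∀ x ∈ μ.cells, ∀ y ∈ μ.cells, x ∉ ν.cells → x.2 = y.2 → x.1 < y.1 → False := by
      intro x hx y hy hxn hcol hlt
      apply hxn
      apply mem_stripSub.mpr
      have hy2 : y.2 < μ.rowLen y.1 := YoungDiagram.mem_iff_lt_rowLen.mp ((μ.mem_cells y).mp hy)
      have ha := μ.rowLen_anti (x.1 + 1) y.1 hlt
      have hb := stripFun_ge μ c x.1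
      omega
    refine ⟨F, ⟨?_, ?_⟩, ?_, ?_⟩
    · -- weakly increasing along rows
      rintro ⟨x1, x2⟩ hx ⟨y1, y2⟩ hy hrow hlt
      simp only at hrow hlt
      by_cases hxν : (x1, x2) ∈ ν.cells <;> by_cases hyν : (y1, y2) ∈ ν.cells
      · rw [hFν _ hxν, hFν _ hyν]
        exact hCS'.1 _ hxν _ hyν hrow hlt
      · rw [hFν _ hxν, hFstrip _ hy hyν]
        exact le_trans (Finset.mem_Icc.mp (hvals _ hxν)).2 (Nat.le_succ d)
      · exfalso
        exact hxν (ν.up_left_mem (le_of_eq hrow) (le_of_lt hlt) ((ν.mem_cells _).mp hyν))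
      · rw [hFstrip _ hx hxν, hFstrip _ hy hyν]
    · -- strictly increasing down columns
      rintro ⟨x1, x2⟩ hx ⟨y1, y2⟩ hy hcol hlt
      simp only at hcol hlt
      by_cases hxν : (x1, x2) ∈ ν.cells <;> by_cases hyν : (y1, y2) ∈ ν.cells
      · rw [hFν _ hxν, hFν _ hyν]
        exact hCS'.2 _ hxν _ hyν hcol hlt
      · rw [hFstrip _ hy hyν]
        exact Nat.lt_succ_of_le (hFle _ hxν)
      · exfalso
        exact hxν (ν.up_left_mem (le_of_lt hlt) (le_of_eq hcol) ((ν.mem_cells _).mp hyν))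
      · exact absurd (hstripcol _ hx _ hy hxν hcol hlt) not_false
    · -- content
      intro k hk
      obtain ⟨hk1, hk2⟩ := Finset.mem_Icc.mp hk
      rcases (by omega : k ≤ d ∨ k = d + 1) with hkd | hkd
      · have heq : μ.cells.filter (fun x => F x = k) = ν.cells.filter fun x => F' x = k := by
          ext x
          simp only [Finset.mem_filter]
          constructor
          · rintro ⟨hxμ, hxk⟩
            by_cases hxν : x ∈ ν.cells
            · refine ⟨hxν, ?_⟩
              rw [← hFν x hxν]
              exact hxk
            · exfalso
              rw [hFstrip x hxμ hxν] at hxk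
              omega
          · rintro ⟨hxν, hxk⟩
            exact ⟨hνsub hxν, (hFν x hxν).trans hxk⟩
        rw [heq]
        exact hcont' k (Finset.mem_Icc.mpr ⟨hk1, hkd⟩)
      · have heq : μ.cells.filter (fun x => F x = k) = μ.cells \ ν.cells := by
          ext x
          simp only [Finset.mem_filter, Finset.mem_sdiff]
          constructor
          · rintro ⟨hxμ, hxk⟩
            refine ⟨hxμ, fun hxν => ?_⟩
            have := hFle x hxν
            omega
          · rintro ⟨hxμ, hxν⟩
            refine ⟨hxμ, ?_⟩
            rw [hFstrip x hxμ hxν, hkd]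
        rw [heq, Finset.card_sdiff_of_subset hνsub, hkd]
        have e1 : μ.card = μ.cells.card := rfl
        have e2 : ν.card = ν.cells.card := rfl
        omega
    · -- zero off
      intro x hx
      have hxν : x ∉ ν.cells := fun h => hx (hνsub h)
      simp only [hFdef]
      rw [if_neg fun h => hx h.1]
      exact hzero' x hxν


lemma transpose_cells_card (μ : YoungDiagram) : μ.transpose.card = μ.card := by
  have himg : μ.transpose.cells = μ.cells.image Prod.swap := by
    ext x
    simp only [Finset.mem_image]
    constructor
    · intro hx
      exact ⟨x.swap, (μ.mem_cells _).mpr (YoungDiagram.mem_transpose.mp ((μ.transpose.mem_cells _).mp hx)), Prod.swap_swap x⟩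
    · rintro ⟨y, hy, rfl⟩
      rw [μ.transpose.mem_cells, YoungDiagram.mem_transpose, Prod.swap_swap]
      exact (μ.mem_cells _).mp hy
  show μ.transpose.cells.card = μ.cells.card
  rw [himg, Finset.card_image_of_injective _ Prod.swap_injective]

lemma rsyt_to_csyt (d : ℕ) (s : ℕ → ℕ) (μ : YoungDiagram) (F : ℕ × ℕ → ℕ)
    (h : F ∈ RSYTset d s μ.cells) : (F ∘ Prod.swap) ∈ CSYTset d s μ.transpose.cells := by
  obtain ⟨⟨hr1, hr2⟩, hcont, hzero⟩ := h
  have hmem : ∀ x : ℕ × ℕ, x ∈ μ.transpose.cells → x.swap ∈ μ.cells := by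
    intro x hx
    exact (μ.mem_cells _).mpr (YoungDiagram.mem_transpose.mp ((μ.transpose.mem_cells _).mp hx))
  refine ⟨⟨?_, ?_⟩, ?_, ?_⟩
  · intro x hx y hy hrow hlt
    exact hr2 x.swap (hmem x hx) y.swap (hmem y hy) hrow hlt
  · intro x hx y hy hcol hlt
    exact hr1 x.swap (hmem x hx) y.swap (hmem y hy) hcol hlt
  · intro k hk
    rw [← hcont k hk]
    refine Finset.card_bij (fun x _ => x.swap) ?_ ?_ ?_
    · intro x hx
      simp only [Finset.mem_filter] at hx ⊢
      exact ⟨hmem x hx.1, hx.2⟩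
    · intro x _ y _ hxy
      exact Prod.swap_injective hxy
    · intro y hy
      simp only [Finset.mem_filter] at hy ⊢
      refine ⟨y.swap, ⟨?_, ?_⟩, Prod.swap_swap y⟩
      · rw [μ.transpose.mem_cells, YoungDiagram.mem_transpose, Prod.swap_swap]
        exact (μ.mem_cells _).mp hy.1
      · show F y.swap.swap = k
        rw [Prod.swap_swap]
        exact hy.2
  · intro x hx
    apply hzero
    intro hmem'
    apply hx
    rw [μ.transpose.mem_cells, YoungDiagram.mem_transpose]
    exact (μ.mem_cells _).mp hmem'

lemma csyt_to_rsyt (d : ℕ) (s : ℕ → ℕ) (μ : YoungDiagram) (F : ℕ × ℕ → ℕ)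
    (h : F ∈ CSYTset d s μ.cells) : (F ∘ Prod.swap) ∈ RSYTset d s μ.transpose.cells := by
  obtain ⟨⟨hr1, hr2⟩, hcont, hzero⟩ := h
  have hmem : ∀ x : ℕ × ℕ, x ∈ μ.transpose.cells → x.swap ∈ μ.cells := by
    intro x hx
    exact (μ.mem_cells _).mpr (YoungDiagram.mem_transpose.mp ((μ.transpose.mem_cells _).mp hx))
  refine ⟨⟨?_, ?_⟩, ?_, ?_⟩
  · intro x hx y hy hrow hlt
    exact hr2 x.swap (hmem x hx) y.swap (hmem y hy) hrow hlt
  · intro x hx y hy hcol hlt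
    exact hr1 x.swap (hmem x hx) y.swap (hmem y hy) hcol hlt
  · intro k hk
    rw [← hcont k hk]
    refine Finset.card_bij (fun x _ => x.swap) ?_ ?_ ?_
    · intro x hx
      simp only [Finset.mem_filter] at hx ⊢
      exact ⟨hmem x hx.1, hx.2⟩
    · intro x _ y _ hxy
      exact Prod.swap_injective hxy
    · intro y hy
      simp only [Finset.mem_filter] at hy ⊢
      refine ⟨y.swap, ⟨?_, ?_⟩, Prod.swap_swap y⟩
      · rw [μ.transpose.mem_cells, YoungDiagram.mem_transpose, Prod.swap_swap]
        exact (μ.mem_cells _).mp hy.1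
      · show F y.swap.swap = k
        rw [Prod.swap_swap]
        exact hy.2
  · intro x hx
    apply hzero
    intro hmem'
    apply hx
    rw [μ.transpose.mem_cells, YoungDiagram.mem_transpose]
    exact (μ.mem_cells _).mp hmem'

lemma rsyt_nonempty_iff (d : ℕ) (s : ℕ → ℕ) (μ : YoungDiagram) :
    (RSYTset d s μ.cells).Nonempty ↔ (CSYTset d s μ.transpose.cells).Nonempty := by
  constructor
  · rintro ⟨F, hF⟩
    exact ⟨F ∘ Prod.swap, rsyt_to_csyt d s μ F hF⟩
  · rintro ⟨F, hF⟩
    have := csyt_to_rsyt d s μ.transpose F hF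
    rw [YoungDiagram.transpose_transpose] at this
    exact ⟨F ∘ Prod.swap, this⟩


/-- For a partition `λ` of `n` (a Young diagram `μ` with `n` cells) and a
composition `ς = (s 1, …, s d)` of `n`: `CSYT^λ_ς ≠ ∅ ↔ λ ⊵ ς^ord` and
`RSYT^λ_ς ≠ ∅ ↔ λ̄ ⊵ ς^ord`, where `λ̄` is the transpose of `λ`. -/
theorem csyt_rsyt_nonempty_iff_dominance
    (n d : ℕ) (hn : 0 < n) (hd : 0 < d) (s : ℕ → ℕ)
    (hpos : ∀ k ∈ Finset.Icc 1 d, 0 < s k)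
    (hsum : ∑ k ∈ Finset.Icc 1 d, s k = n)
    (μ : YoungDiagram) (hcard : μ.card = n) :
    ((CSYTset d s μ.cells).Nonempty ↔ Dominates (fun i => μ.rowLen i) (sOrd d s)) ∧
    ((RSYTset d s μ.cells).Nonempty ↔ Dominates (fun i => μ.transpose.rowLen i) (sOrd d s)) := by
  have hμsum : μ.card = ∑ k ∈ Finset.Icc 1 d, s k := by rw [hcard, hsum]
  have hTsum : μ.transpose.card = ∑ k ∈ Finset.Icc 1 d, s k := by
    rw [transpose_cells_card, hcard, hsum]
  constructor
  · exact ⟨fun hne => csyt_forward d s μ hμsum hne,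
      fun hdom => csyt_exists d s μ hμsum hdom⟩
  · rw [rsyt_nonempty_iff]
    exact ⟨fun hne => csyt_forward d s μ.transpose hTsum hne,
      fun hdom => csyt_exists d s μ.transpose hTsum hdom⟩
end
end

section
/- Let λ = (1^n) be the single-column partition of n and let T be the unique element of RSYT^{(1^n)}_ς. Then the fused Specht polynomial satisfies 𝓕_T(x_1,…,x_d) = ∏_{1≤i<j≤d} (x_j − x_i)^{s_i s_j}. Equivalently: if Q is the exact polynomial quotient of the full Vandermonde ∏_{1≤i<j≤n}(x_j − x_i) by V_ς(x_1,…,x_n), then substituting, for each k, all variables x_{q_k},…,x_{q_{k+1}−1} by a single variable x_k turns Q into ∏_{1≤i<j≤d}(x_j − x_i)^{s_i s_j}. -/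
open scoped Classical
open MvPolynomial

noncomputable section

/-- `q k = 1 + s 1 + ⋯ + s (k-1)`. -/
def qIdx (s : ℕ → ℕ) (k : ℕ) : ℕ := 1 + ∑ j ∈ Finset.Ico 1 k, s j

/-- Extension of a permutation of `Fin n` to the 1-based letters `{1, …, n} ⊆ ℕ`. -/
def extendPerm (n : ℕ) (σ : Equiv.Perm (Fin n)) : ℕ → ℕ :=
  fun i => if h : 1 ≤ i ∧ i ≤ n then ((σ ⟨i - 1, by omega⟩ : Fin n) : ℕ) + 1 else i

/-- Membership in the colored symmetric group `S_{s_1} × ⋯ × S_{s_d}`. -/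
def InBlocks (n d : ℕ) (s : ℕ → ℕ) (σ : Equiv.Perm (Fin n)) : Prop :=
  ∀ i : Fin n, ∀ k ∈ Finset.Icc 1 d,
    (qIdx s k ≤ (i : ℕ) + 1 ∧ (i : ℕ) + 1 < qIdx s (k + 1)) →
    (qIdx s k ≤ ((σ i : Fin n) : ℕ) + 1 ∧ ((σ i : Fin n) : ℕ) + 1 < qIdx s (k + 1))

/-- The action of the `ς`-antisymmetrizer `p_ς` on polynomials. -/
def pAct (n d : ℕ) (s : ℕ → ℕ) (f : MvPolynomial ℕ ℂ) : MvPolynomial ℕ ℂ :=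
  (∏ k ∈ Finset.Icc 1 d, ((s k).factorial : ℂ))⁻¹ •
    ∑ σ ∈ Finset.univ.filter (InBlocks n d s),
      ((Equiv.Perm.sign σ : ℤ) : ℂ) • MvPolynomial.rename (extendPerm n σ) f

/-- The Specht polynomial of a numbering. -/
def spechtPoly (cells : Finset (ℕ × ℕ)) (Nb : ℕ × ℕ → ℕ) : MvPolynomial ℕ ℂ :=
  ∏ p ∈ (cells ×ˢ cells).filter (fun p => p.1.2 = p.2.2 ∧ p.2.1 < p.1.1),
    (X (Nb p.1) - X (Nb p.2))

/-- Column-reading order on cells. -/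
def colReadLT (c c' : ℕ × ℕ) : Prop :=
  c.2 < c'.2 ∨ (c.2 = c'.2 ∧ c.1 < c'.1)

/-- The standardization `F̃` of a filling `F`. -/
def stdize (s : ℕ → ℕ) (cells : Finset (ℕ × ℕ)) (F : ℕ × ℕ → ℕ) : ℕ × ℕ → ℕ :=
  fun c => qIdx s (F c) + (cells.filter fun c' => colReadLT c' c ∧ F c' = F c).card

/-- `V_ς(x) = ∏_{k=1}^d ∏_{q_k ≤ i < j < q_{k+1}} (x_j - x_i)`. -/
def vandBlocks (d : ℕ) (s : ℕ → ℕ) : MvPolynomial ℕ ℂ :=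
  ∏ k ∈ Finset.Icc 1 d,
    ∏ p ∈ ((Finset.Icc (qIdx s k) (qIdx s (k + 1) - 1)) ×ˢ
            (Finset.Icc (qIdx s k) (qIdx s (k + 1) - 1))).filter (fun p => p.1 < p.2),
      (X p.2 - X p.1)

/-- The full Vandermonde polynomial `∏_{1 ≤ i < j ≤ n} (x_j - x_i)`. -/
def fullVand (n : ℕ) : MvPolynomial ℕ ℂ :=
  ∏ p ∈ ((Finset.Icc 1 n) ×ˢ (Finset.Icc 1 n)).filter (fun p => p.1 < p.2),
    (X p.2 - X p.1)

/-- The exact quotient of `f` by `v` (the unique `g` with `f = v * g` when it exists). -/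
def exactQuot (v f : MvPolynomial ℕ ℂ) : MvPolynomial ℕ ℂ :=
  if h : ∃ g, f = v * g then h.choose else 0

/-- The substitution collapsing each block of variables `x_{q_k}, …, x_{q_{k+1}-1}`
to the single variable `x_k`. -/
def collapseVar (d : ℕ) (s : ℕ → ℕ) : ℕ → ℕ :=
  fun i => ∑ k ∈ (Finset.Icc 1 d).filter (fun k => qIdx s k ≤ i ∧ i < qIdx s (k + 1)), k

/-- The fused Specht polynomial `𝓕_F`. -/
def fusedSpecht (n d : ℕ) (s : ℕ → ℕ) (cells : Finset (ℕ × ℕ)) (F : ℕ × ℕ → ℕ) :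
    MvPolynomial ℕ ℂ :=
  MvPolynomial.rename (collapseVar d s)
    (exactQuot (vandBlocks d s) (pAct n d s (spechtPoly cells (stdize s cells F))))

/-- The single-column Young diagram `(1^n)`: one column of `n` cells. -/
def oneColumn (n : ℕ) : Finset (ℕ × ℕ) := (Finset.range n) ×ˢ ({0} : Finset ℕ)

namespace FSAux

variable {n d : ℕ} {s : ℕ → ℕ}

lemma qIdx_one : qIdx s 1 = 1 := by simp [qIdx]

lemma qIdx_pos (k : ℕ) : 1 ≤ qIdx s k := Nat.le_add_right 1 _

lemma qIdx_succ {k : ℕ} (hk : 1 ≤ k) : qIdx s (k + 1) = qIdx s k + s k := by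
  unfold qIdx
  rw [Finset.sum_Ico_succ_top hk]
  ring

lemma qIdx_mono : Monotone (qIdx s) := fun a b h =>
  Nat.add_le_add_left (Finset.sum_le_sum_of_subset (Finset.Ico_subset_Ico le_rfl h)) 1

lemma qIdx_top (hsum : ∑ k ∈ Finset.Icc 1 d, s k = n) : qIdx s (d + 1) = n + 1 := by
  unfold qIdx
  rw [Finset.Ico_add_one_right_eq_Icc, hsum]
  ring

lemma qIdx_lt_succ (hpos : ∀ k ∈ Finset.Icc 1 d, 0 < s k) {k : ℕ}
    (hk : k ∈ Finset.Icc 1 d) : qIdx s k < qIdx s (k + 1) := by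
  rw [qIdx_succ (Finset.mem_Icc.mp hk).1]
  exact Nat.lt_add_of_pos_right (hpos k hk)

lemma blk_unique {k k' m : ℕ} (hk : k ∈ Finset.Icc 1 d) (hk' : k' ∈ Finset.Icc 1 d)
    (h1 : qIdx s k ≤ m) (h2 : m < qIdx s (k + 1))
    (h1' : qIdx s k' ≤ m) (h2' : m < qIdx s (k' + 1)) : k = k' := by
  by_contra hne
  rcases Nat.lt_or_ge k k' with h | h
  · exact absurd ((qIdx_mono (Nat.succ_le_of_lt h)).trans h1') (Nat.not_le_of_lt h2)
  · have h' : k' < k := lt_of_le_of_ne h (fun e => hne e.symm)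
    exact absurd ((qIdx_mono (Nat.succ_le_of_lt h')).trans h1) (Nat.not_le_of_lt h2')

lemma exists_blk (hd : 0 < d) (hsum : ∑ k ∈ Finset.Icc 1 d, s k = n)
    {m : ℕ} (h1 : 1 ≤ m) (h2 : m ≤ n) :
    ∃ k, k ∈ Finset.Icc 1 d ∧ qIdx s k ≤ m ∧ m < qIdx s (k + 1) := by
  classical
  have hne : ((Finset.Icc 1 d).filter (fun k => qIdx s k ≤ m)).Nonempty := by
    refine ⟨1, Finset.mem_filter.mpr ⟨Finset.mem_Icc.mpr ⟨le_rfl, hd⟩, ?_⟩⟩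
    rw [qIdx_one]; exact h1
  set K := ((Finset.Icc 1 d).filter (fun k => qIdx s k ≤ m)).max' hne with hK
  have hKmem := ((Finset.Icc 1 d).filter (fun k => qIdx s k ≤ m)).max'_mem hne
  rw [Finset.mem_filter] at hKmem
  refine ⟨K, hKmem.1, hKmem.2, ?_⟩
  rcases Nat.lt_or_ge m (qIdx s (K + 1)) with h | h
  · exact h
  · -- then K+1 ∈ filter, contradicting maximality unless K = d
    have hKd : K ≤ d := (Finset.mem_Icc.mp hKmem.1).2
    rcases Nat.lt_or_ge K d with hlt | hge
    · have : K + 1 ∈ (Finset.Icc 1 d).filter (fun k => qIdx s k ≤ m) := by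
        refine Finset.mem_filter.mpr ⟨Finset.mem_Icc.mpr ⟨by omega, hlt⟩, h⟩
      have := Finset.le_max' _ _ this
      omega
    · have hKeq : K = d := le_antisymm hKd hge
      have : qIdx s (d + 1) ≤ m := hKeq ▸ h
      rw [qIdx_top hsum] at this
      omega

lemma collapseVar_eq {k m : ℕ} (hk : k ∈ Finset.Icc 1 d)
    (h1 : qIdx s k ≤ m) (h2 : m < qIdx s (k + 1)) :
    collapseVar d s m = k := by
  classical
  unfold collapseVar
  have : (Finset.Icc 1 d).filter (fun j => qIdx s j ≤ m ∧ m < qIdx s (j + 1)) = {k} := by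
    ext j
    simp only [Finset.mem_filter, Finset.mem_singleton]
    constructor
    · rintro ⟨hj, hj1, hj2⟩
      exact blk_unique hj hk hj1 hj2 h1 h2
    · rintro rfl
      exact ⟨hk, h1, h2⟩
  rw [this, Finset.sum_singleton]

lemma block_le {k : ℕ} (hk : k ∈ Finset.Icc 1 d) (hsum : ∑ k ∈ Finset.Icc 1 d, s k = n)
    {m : ℕ} (h2 : m < qIdx s (k + 1)) : m ≤ n := by
  have : qIdx s (k + 1) ≤ qIdx s (d + 1) :=
    qIdx_mono (Nat.add_le_add_right (Finset.mem_Icc.mp hk).2 1)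
  rw [qIdx_top hsum] at this
  omega

/-- The cross-block product. -/
def crossPoly (d : ℕ) (s : ℕ → ℕ) : MvPolynomial ℕ ℂ :=
  ∏ p ∈ ((Finset.Icc 1 d) ×ˢ (Finset.Icc 1 d)).filter (fun p => p.1 < p.2),
    ∏ q ∈ (Finset.Ico (qIdx s p.1) (qIdx s (p.1 + 1))) ×ˢ
          (Finset.Ico (qIdx s p.2) (qIdx s (p.2 + 1))),
      ((X q.2 - X q.1 : MvPolynomial ℕ ℂ))

lemma fullVand_factor (hd : 0 < d) (hsum : ∑ k ∈ Finset.Icc 1 d, s k = n) :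
    fullVand n = vandBlocks d s * crossPoly d s := by
  classical
  unfold fullVand
  rw [← Finset.prod_filter_mul_prod_filter_not
    (((Finset.Icc 1 n) ×ˢ (Finset.Icc 1 n)).filter (fun p => p.1 < p.2))
    (fun p => collapseVar d s p.1 = collapseVar d s p.2)]
  congr 1
  · -- same-block part equals vandBlocks
    have hset : ((((Finset.Icc 1 n) ×ˢ (Finset.Icc 1 n)).filter (fun p => p.1 < p.2)).filter
        (fun p => collapseVar d s p.1 = collapseVar d s p.2))
      = (Finset.Icc 1 d).biUnion (fun k =>
          ((Finset.Ico (qIdx s k) (qIdx s (k + 1))) ×ˢ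
           (Finset.Ico (qIdx s k) (qIdx s (k + 1)))).filter (fun p => p.1 < p.2)) := by
      ext p
      simp only [Finset.mem_filter, Finset.mem_product, Finset.mem_biUnion, Finset.mem_Icc,
        Finset.mem_Ico]
      constructor
      · rintro ⟨⟨⟨⟨h11, h12⟩, h21, h22⟩, hlt⟩, heq⟩
        obtain ⟨k, hk, hb1, hb2⟩ := exists_blk hd hsum h11 h12
        obtain ⟨k', hk', hb1', hb2'⟩ := exists_blk hd hsum h21 h22
        have e1 := collapseVar_eq hk hb1 hb2
        have e2 := collapseVar_eq hk' hb1' hb2'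
        have hkk : k = k' := by rw [← e1, ← e2]; exact heq
        subst hkk
        exact ⟨k, Finset.mem_Icc.mp hk, ⟨⟨hb1, hb2⟩, hb1', hb2'⟩, hlt⟩
      · rintro ⟨k, hk, ⟨⟨hb1, hb2⟩, hb1', hb2'⟩, hlt⟩
        have hk' : k ∈ Finset.Icc 1 d := Finset.mem_Icc.mpr hk
        have h11 : 1 ≤ p.1 := le_trans (qIdx_pos k) hb1
        have h21 : 1 ≤ p.2 := le_trans (qIdx_pos k) hb1'
        have h12 : p.1 ≤ n := block_le hk' hsum hb2
        have h22 : p.2 ≤ n := block_le hk' hsum hb2'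
        refine ⟨⟨⟨⟨h11, h12⟩, h21, h22⟩, hlt⟩, ?_⟩
        rw [collapseVar_eq hk' hb1 hb2, collapseVar_eq hk' hb1' hb2']
    rw [hset, Finset.prod_biUnion]
    · unfold vandBlocks
      refine Finset.prod_congr rfl (fun k hk => ?_)
      have hIcc : Finset.Icc (qIdx s k) (qIdx s (k + 1) - 1)
          = Finset.Ico (qIdx s k) (qIdx s (k + 1)) := by
        rw [← Finset.Ico_add_one_right_eq_Icc, Nat.sub_add_cancel (qIdx_pos _)]
      rw [hIcc]
    · intro a ha b hb hab
      refine Finset.disjoint_left.mpr (fun p hp hp' => ?_)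
      simp only [Finset.mem_filter, Finset.mem_product, Finset.mem_Ico] at hp hp'
      simp only [Finset.mem_coe] at ha hb
      exact hab (blk_unique ha hb hp.1.1.1 hp.1.1.2 hp'.1.1.1 hp'.1.1.2)
  · -- cross part equals crossPoly
    have hset : ((((Finset.Icc 1 n) ×ˢ (Finset.Icc 1 n)).filter (fun p => p.1 < p.2)).filter
        (fun p => ¬ collapseVar d s p.1 = collapseVar d s p.2))
      = (((Finset.Icc 1 d) ×ˢ (Finset.Icc 1 d)).filter (fun p => p.1 < p.2)).biUnion (fun kl =>
          (Finset.Ico (qIdx s kl.1) (qIdx s (kl.1 + 1))) ×ˢ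
          (Finset.Ico (qIdx s kl.2) (qIdx s (kl.2 + 1)))) := by
      ext p
      simp only [Finset.mem_filter, Finset.mem_product, Finset.mem_biUnion, Finset.mem_Icc,
        Finset.mem_Ico]
      constructor
      · rintro ⟨⟨⟨⟨h11, h12⟩, h21, h22⟩, hlt⟩, hne⟩
        obtain ⟨k, hk, hb1, hb2⟩ := exists_blk hd hsum h11 h12
        obtain ⟨k', hk', hb1', hb2'⟩ := exists_blk hd hsum h21 h22
        have e1 := collapseVar_eq hk hb1 hb2
        have e2 := collapseVar_eq hk' hb1' hb2'
        have hkk : k ≠ k' := by rw [e1, e2] at hne; exact hne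
        have hklt : k < k' := by
          rcases Nat.lt_or_ge k k' with h | h
          · exact h
          · exfalso
            have h' : k' < k := lt_of_le_of_ne h (fun e => hkk e.symm)
            have : qIdx s (k' + 1) ≤ qIdx s k := qIdx_mono (Nat.succ_le_of_lt h')
            omega
        exact ⟨(k, k'), ⟨⟨Finset.mem_Icc.mp hk, Finset.mem_Icc.mp hk'⟩, hklt⟩,
          ⟨hb1, hb2⟩, hb1', hb2'⟩
      · rintro ⟨kl, ⟨⟨hk1, hk2⟩, hklt⟩, ⟨hb1, hb2⟩, hb1', hb2'⟩
        have hk1' : kl.1 ∈ Finset.Icc 1 d := Finset.mem_Icc.mpr hk1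
        have hk2' : kl.2 ∈ Finset.Icc 1 d := Finset.mem_Icc.mpr hk2
        have h11 : 1 ≤ p.1 := le_trans (qIdx_pos _) hb1
        have h21 : 1 ≤ p.2 := le_trans (qIdx_pos _) hb1'
        have h12 : p.1 ≤ n := block_le hk1' hsum hb2
        have h22 : p.2 ≤ n := block_le hk2' hsum hb2'
        have hlt : p.1 < p.2 := by
          have : qIdx s (kl.1 + 1) ≤ qIdx s kl.2 := qIdx_mono (Nat.succ_le_of_lt hklt)
          omega
        refine ⟨⟨⟨⟨h11, h12⟩, h21, h22⟩, hlt⟩, ?_⟩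
        rw [collapseVar_eq hk1' hb1 hb2, collapseVar_eq hk2' hb1' hb2']
        omega
    rw [hset, Finset.prod_biUnion]
    · rfl
    · intro a ha b hb hab
      simp only [Finset.mem_coe, Finset.mem_filter, Finset.mem_product] at ha hb
      refine Finset.disjoint_left.mpr (fun p hp hp' => ?_)
      simp only [Finset.mem_product, Finset.mem_Ico] at hp hp'
      refine hab ?_
      have e1 : a.1 = b.1 := blk_unique ha.1.1 hb.1.1 hp.1.1 hp.1.2 hp'.1.1 hp'.1.2
      have e2 : a.2 = b.2 := blk_unique ha.1.2 hb.1.2 hp.2.1 hp.2.2 hp'.2.1 hp'.2.2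
      exact Prod.ext e1 e2

lemma rename_crossPoly :
    MvPolynomial.rename (collapseVar d s) (crossPoly d s)
      = ∏ p ∈ ((Finset.Icc 1 d) ×ˢ (Finset.Icc 1 d)).filter (fun p => p.1 < p.2),
          ((X p.2 - X p.1 : MvPolynomial ℕ ℂ)) ^ (s p.1 * s p.2) := by
  classical
  unfold crossPoly
  rw [map_prod]
  refine Finset.prod_congr rfl (fun p hp => ?_)
  rw [map_prod]
  simp only [Finset.mem_filter, Finset.mem_product] at hp
  have h1 : p.1 ∈ Finset.Icc 1 d := hp.1.1
  have h2 : p.2 ∈ Finset.Icc 1 d := hp.1.2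
  have key : ∀ q ∈ (Finset.Ico (qIdx s p.1) (qIdx s (p.1 + 1))) ×ˢ
      (Finset.Ico (qIdx s p.2) (qIdx s (p.2 + 1))),
      MvPolynomial.rename (collapseVar d s) ((X q.2 - X q.1 : MvPolynomial ℕ ℂ))
        = (X p.2 - X p.1 : MvPolynomial ℕ ℂ) := by
    intro q hq
    simp only [Finset.mem_product, Finset.mem_Ico] at hq
    rw [map_sub, rename_X, rename_X,
      collapseVar_eq h1 hq.1.1 hq.1.2, collapseVar_eq h2 hq.2.1 hq.2.2]
  rw [Finset.prod_congr rfl key, Finset.prod_const, Finset.card_product,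
    Nat.card_Ico, Nat.card_Ico, qIdx_succ (Finset.mem_Icc.mp h1).1,
    qIdx_succ (Finset.mem_Icc.mp h2).1]
  rw [Nat.add_sub_cancel_left, Nat.add_sub_cancel_left]

lemma fullVand_eq_det :
    fullVand n
      = (Matrix.vandermonde (fun i : Fin n => (X ((i : ℕ) + 1) : MvPolynomial ℕ ℂ))).det := by
  rw [Matrix.det_vandermonde]
  unfold fullVand
  rw [Finset.prod_sigma']
  refine (Finset.prod_nbij (fun x => ((x.1 : ℕ) + 1, (x.2 : ℕ) + 1)) ?_ ?_ ?_ ?_).symm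
  · intro x hx
    simp only [Finset.mem_sigma, Finset.mem_univ, Finset.mem_Ioi, true_and] at hx
    simp only [Finset.mem_filter, Finset.mem_product, Finset.mem_Icc]
    have h1 := x.1.isLt
    have h2 := x.2.isLt
    have h3 : (x.1 : ℕ) < (x.2 : ℕ) := hx
    omega
  · intro x hx y hy hxy
    simp only [Prod.mk.injEq, Nat.add_right_cancel_iff] at hxy
    exact Sigma.ext (Fin.ext hxy.1) (heq_of_eq (Fin.ext hxy.2))
  · intro p hp
    simp only [Finset.coe_filter, Finset.mem_product, Finset.mem_Icc, Set.mem_setOf_eq] at hp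
    obtain ⟨⟨⟨ha1, ha2⟩, hb1, hb2⟩, hlt⟩ := hp
    refine ⟨⟨⟨p.1 - 1, by omega⟩, ⟨p.2 - 1, by omega⟩⟩, ?_, ?_⟩
    · simp only [Finset.coe_sigma, Set.mem_sigma_iff, Finset.mem_coe, Finset.mem_univ,
        Finset.mem_Ioi, true_and]
      exact Fin.mk_lt_mk.mpr (by omega)
    · refine Prod.ext ?_ ?_
      · show p.1 - 1 + 1 = p.1
        omega
      · show p.2 - 1 + 1 = p.2
        omega
  · intro x _
    rfl

lemma extendPerm_apply (σ : Equiv.Perm (Fin n)) (i : Fin n) :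
    extendPerm n σ ((i : ℕ) + 1) = ((σ i : Fin n) : ℕ) + 1 := by
  unfold extendPerm
  rw [dif_pos ⟨Nat.le_add_left 1 _, Nat.succ_le_of_lt i.isLt⟩]
  congr 2

lemma rename_extendPerm_fullVand (σ : Equiv.Perm (Fin n)) :
    MvPolynomial.rename (extendPerm n σ) (fullVand n)
      = (((Equiv.Perm.sign σ : ℤ) : ℂ)) • fullVand n := by
  classical
  rw [fullVand_eq_det, AlgHom.map_det]
  have hmap : (Matrix.vandermonde fun i : Fin n => (X ((i : ℕ) + 1) : MvPolynomial ℕ ℂ)).map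
      (MvPolynomial.rename (extendPerm n σ))
    = ((Matrix.vandermonde fun i : Fin n => (X ((i : ℕ) + 1) : MvPolynomial ℕ ℂ)).submatrix σ id) := by
    ext i j
    simp only [Matrix.map_apply, Matrix.vandermonde_apply, Matrix.submatrix_apply, id_eq,
      map_pow, rename_X, extendPerm_apply]
  rw [show ((MvPolynomial.rename (extendPerm n σ)).mapMatrix
      (Matrix.vandermonde fun i : Fin n => (X ((i : ℕ) + 1) : MvPolynomial ℕ ℂ)))
    = (Matrix.vandermonde fun i : Fin n => (X ((i : ℕ) + 1) : MvPolynomial ℕ ℂ)).map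
        (MvPolynomial.rename (extendPerm n σ)) from rfl,
    hmap, Matrix.det_permute, MvPolynomial.smul_eq_C_mul]
  congr 1

section Card

/-- The block function on `Fin n`. -/
def blkF (n d : ℕ) (s : ℕ → ℕ) : Fin n → ℕ := fun i => collapseVar d s ((i : ℕ) + 1)

variable (hd : 0 < d) (hpos : ∀ k ∈ Finset.Icc 1 d, 0 < s k)
  (hsum : ∑ k ∈ Finset.Icc 1 d, s k = n)

include hd hsum

lemma blkF_spec (i : Fin n) :
    blkF n d s i ∈ Finset.Icc 1 d ∧ qIdx s (blkF n d s i) ≤ (i : ℕ) + 1 ∧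
      (i : ℕ) + 1 < qIdx s (blkF n d s i + 1) := by
  obtain ⟨k, hk, hb1, hb2⟩ := exists_blk hd hsum (Nat.le_add_left 1 _)
    (Nat.succ_le_of_lt i.isLt)
  have := collapseVar_eq hk hb1 hb2
  unfold blkF
  rw [this]
  exact ⟨hk, hb1, hb2⟩

lemma blkF_eq_iff (i : Fin n) (k : ℕ) (hk : k ∈ Finset.Icc 1 d) :
    blkF n d s i = k ↔ (qIdx s k ≤ (i : ℕ) + 1 ∧ (i : ℕ) + 1 < qIdx s (k + 1)) := by
  obtain ⟨hk', hb1, hb2⟩ := blkF_spec hd hsum i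
  constructor
  · rintro rfl
    exact ⟨hb1, hb2⟩
  · rintro ⟨h1, h2⟩
    exact blk_unique hk' hk hb1 hb2 h1 h2

lemma inBlocks_iff (σ : Equiv.Perm (Fin n)) :
    InBlocks n d s σ ↔ blkF n d s ∘ σ = blkF n d s := by
  constructor
  · intro h
    funext i
    obtain ⟨hk, hb1, hb2⟩ := blkF_spec hd hsum i
    obtain ⟨hb1', hb2'⟩ := h i (blkF n d s i) hk ⟨hb1, hb2⟩
    exact (blkF_eq_iff hd hsum (σ i) _ hk).mpr ⟨hb1', hb2'⟩
  · intro h i k hk hb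
    have h1 : blkF n d s i = k := (blkF_eq_iff hd hsum i k hk).mpr hb
    have h2 : blkF n d s (σ i) = k := by
      rw [← h1]; exact congrFun h i
    exact (blkF_eq_iff hd hsum (σ i) k hk).mp h2

lemma card_fiber (k : ℕ) (hk : k ∈ Finset.Icc 1 d) :
    Fintype.card {a : Fin n // blkF n d s a = k} = s k := by
  classical
  rw [Fintype.card_subtype]
  have hcard : (Finset.univ.filter (fun a : Fin n => blkF n d s a = k)).card
      = (Finset.Ico (qIdx s k - 1) (qIdx s (k + 1) - 1)).card := by
    refine Finset.card_bij (fun a _ => (a : ℕ)) ?_ ?_ ?_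
    · intro a ha
      rw [Finset.mem_filter] at ha
      have hb := (blkF_eq_iff hd hsum a k hk).mp ha.2
      have h1 := qIdx_pos (s := s) k
      show (a : ℕ) ∈ Finset.Ico (qIdx s k - 1) (qIdx s (k + 1) - 1)
      rw [Finset.mem_Ico]
      omega
    · intro a _ b _ h
      exact Fin.ext h
    · intro m hm
      rw [Finset.mem_Ico] at hm
      have h1 := qIdx_pos (s := s) k
      have h1' := qIdx_pos (s := s) (k + 1)
      have hb1 : qIdx s k ≤ m + 1 := by omega
      have hb2 : m + 1 < qIdx s (k + 1) := by omega
      have hle : m + 1 ≤ n := block_le hk hsum hb2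
      have hmn : m < n := by omega
      refine ⟨⟨m, hmn⟩, Finset.mem_filter.mpr ⟨Finset.mem_univ _, ?_⟩, rfl⟩
      exact (blkF_eq_iff hd hsum _ k hk).mpr ⟨hb1, hb2⟩
  rw [hcard, Nat.card_Ico, qIdx_succ (Finset.mem_Icc.mp hk).1]
  have := qIdx_pos (s := s) k
  omega

include hpos in
lemma image_blkF : Finset.univ.image (blkF n d s) = Finset.Icc 1 d := by
  apply Finset.Subset.antisymm
  · intro k hk
    rw [Finset.mem_image] at hk
    obtain ⟨i, _, rfl⟩ := hk
    exact (blkF_spec hd hsum i).1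
  · intro k hk
    have hlt := qIdx_lt_succ hpos hk
    have hle : qIdx s k ≤ n := by
      have := block_le hk hsum (show qIdx s k < qIdx s (k+1) from hlt)
      exact this
    have h1 := qIdx_pos (s := s) k
    have hin : qIdx s k - 1 < n := by omega
    rw [Finset.mem_image]
    refine ⟨⟨qIdx s k - 1, hin⟩, Finset.mem_univ _, ?_⟩
    refine (blkF_eq_iff hd hsum _ k hk).mpr ⟨by simp; omega, by simp; omega⟩

include hpos in
lemma card_inBlocks :
    (Finset.univ.filter (InBlocks n d s)).card = ∏ k ∈ Finset.Icc 1 d, (s k).factorial := by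
  classical
  have h1 : Finset.univ.filter (InBlocks n d s)
      = Finset.univ.filter (fun σ : Equiv.Perm (Fin n) => blkF n d s ∘ σ = blkF n d s) := by
    apply Finset.filter_congr
    intro σ _
    exact inBlocks_iff hd hsum σ
  rw [h1, ← Fintype.card_subtype, DomMulAct.stabilizer_card' (blkF n d s),
    image_blkF hd hpos hsum]
  refine Finset.prod_congr rfl (fun k hk => ?_)
  rw [card_fiber hd hsum k hk]

omit hd hpos hsum
end Card

section Tableau

lemma downclosed_eq_range {S : Finset ℕ} (hS : ∀ i ∈ S, ∀ j < i, j ∈ S) :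
    S = Finset.range S.card := by
  have h1 : S ⊆ Finset.range S.card := by
    intro i hi
    rw [Finset.mem_range]
    have hsub : Finset.range (i + 1) ⊆ S := by
      intro j hj
      rw [Finset.mem_range, Nat.lt_succ_iff] at hj
      rcases eq_or_lt_of_le hj with h | h
      · rwa [h]
      · exact hS i hi j h
    have := Finset.card_le_card hsub
    rw [Finset.card_range] at this
    omega
  exact Finset.eq_of_subset_of_card_le h1 (le_of_eq (Finset.card_range _))

variable {T : ℕ × ℕ → ℕ}

lemma cell_mem {i : ℕ} (hi : i < n) : ((i, 0) : ℕ × ℕ) ∈ oneColumn n := by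
  simp [oneColumn, hi]

lemma fiber_card (hT : T ∈ RSYTset d s (oneColumn n)) {k : ℕ} (hk : k ∈ Finset.Icc 1 d) :
    ((Finset.range n).filter (fun i => T (i, 0) = k)).card = s k := by
  classical
  have hc := hT.2.1 k hk
  have hset : (oneColumn n).filter (fun c => T c = k)
      = ((Finset.range n).filter (fun i => T (i, 0) = k)) ×ˢ ({0} : Finset ℕ) := by
    ext ⟨a, b⟩
    simp only [oneColumn, Finset.mem_filter, Finset.mem_product, Finset.mem_range,
      Finset.mem_singleton]
    constructor
    · rintro ⟨⟨h1, rfl⟩, h3⟩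
      exact ⟨⟨h1, h3⟩, rfl⟩
    · rintro ⟨⟨h1, h3⟩, rfl⟩
      exact ⟨⟨h1, rfl⟩, h3⟩
  rw [hset, Finset.card_product, Finset.card_singleton, mul_one] at hc
  exact hc

lemma g_mono (hT : T ∈ RSYTset d s (oneColumn n)) {i j : ℕ} (hij : i ≤ j) (hj : j < n) :
    T (i, 0) ≤ T (j, 0) := by
  rcases eq_or_lt_of_le hij with h | h
  · rw [h]
  · exact hT.1.2 (i, 0) (cell_mem (lt_trans h hj)) (j, 0) (cell_mem hj) rfl h

lemma g_mem (hsum : ∑ k ∈ Finset.Icc 1 d, s k = n)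
    (hT : T ∈ RSYTset d s (oneColumn n)) {i : ℕ} (hi : i < n) :
    T (i, 0) ∈ Finset.Icc 1 d := by
  classical
  set U := (Finset.Icc 1 d).biUnion
    (fun k => (Finset.range n).filter (fun i => T (i, 0) = k)) with hU
  have hUsub : U ⊆ Finset.range n := by
    refine Finset.biUnion_subset.mpr (fun k _ => Finset.filter_subset _ _)
  have hUcard : n ≤ U.card := by
    rw [Finset.card_biUnion]
    · rw [Finset.sum_congr rfl (fun k hk => fiber_card hT hk), hsum]
    · intro a _ b _ hab
      refine Finset.disjoint_left.mpr (fun x hx hx' => ?_)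
      rw [Finset.mem_filter] at hx hx'
      exact hab (hx.2 ▸ hx'.2.symm ▸ rfl)
  have hUeq : U = Finset.range n :=
    Finset.eq_of_subset_of_card_le hUsub (by rw [Finset.card_range]; exact hUcard)
  have : i ∈ U := hUeq ▸ Finset.mem_range.mpr hi
  rw [Finset.mem_biUnion] at this
  obtain ⟨k, hk, hk2⟩ := this
  rw [Finset.mem_filter] at hk2
  rw [hk2.2]
  exact hk

lemma prefix_eq (hsum : ∑ k ∈ Finset.Icc 1 d, s k = n)
    (hT : T ∈ RSYTset d s (oneColumn n)) :
    ∀ k, k ≤ d → (Finset.range n).filter (fun i => T (i, 0) ≤ k)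
      = Finset.range (qIdx s (k + 1) - 1) := by
  classical
  intro k
  induction k with
  | zero =>
    intro _
    have h0 : (Finset.range n).filter (fun i => T (i, 0) ≤ 0) = ∅ := by
      refine Finset.filter_eq_empty_iff.mpr (fun {i} hi => ?_)
      rw [Finset.mem_range] at hi
      have := g_mem hsum hT hi
      rw [Finset.mem_Icc] at this
      omega
    rw [h0, qIdx_one]
    rfl
  | succ k ih =>
    intro hk1
    have ihh := ih (by omega)
    have hsplit : (Finset.range n).filter (fun i => T (i, 0) ≤ k + 1)
        = ((Finset.range n).filter (fun i => T (i, 0) ≤ k))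
          ∪ ((Finset.range n).filter (fun i => T (i, 0) = k + 1)) := by
      ext i
      simp only [Finset.mem_filter, Finset.mem_union, Finset.mem_range]
      constructor
      · rintro ⟨h1, h2⟩
        rcases Nat.lt_or_ge (T (i, 0)) (k + 1) with h | h
        · exact Or.inl ⟨h1, by omega⟩
        · exact Or.inr ⟨h1, by omega⟩
      · rintro (⟨h1, h2⟩ | ⟨h1, h2⟩) <;> exact ⟨h1, by omega⟩
    have hdisj : Disjoint ((Finset.range n).filter (fun i => T (i, 0) ≤ k))
        ((Finset.range n).filter (fun i => T (i, 0) = k + 1)) := by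
      refine Finset.disjoint_left.mpr (fun x hx hx' => ?_)
      rw [Finset.mem_filter] at hx hx'
      omega
    have hcard : ((Finset.range n).filter (fun i => T (i, 0) ≤ k + 1)).card
        = qIdx s (k + 2) - 1 := by
      rw [hsplit, Finset.card_union_of_disjoint hdisj, ihh, Finset.card_range,
        fiber_card hT (Finset.mem_Icc.mpr ⟨by omega, hk1⟩),
        qIdx_succ (show 1 ≤ k + 1 by omega)]
      have := qIdx_pos (s := s) (k + 1)
      omega
    have hdc : ∀ i ∈ (Finset.range n).filter (fun i => T (i, 0) ≤ k + 1),
        ∀ j < i, j ∈ (Finset.range n).filter (fun i => T (i, 0) ≤ k + 1) := by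
      intro i hi j hj
      rw [Finset.mem_filter, Finset.mem_range] at hi ⊢
      exact ⟨by omega, le_trans (g_mono hT (le_of_lt hj) hi.1) hi.2⟩
    rw [downclosed_eq_range hdc, hcard]

lemma T_bounds (hsum : ∑ k ∈ Finset.Icc 1 d, s k = n)
    (hT : T ∈ RSYTset d s (oneColumn n)) {i : ℕ} (hi : i < n) :
    T (i, 0) ∈ Finset.Icc 1 d ∧ qIdx s (T (i, 0)) ≤ i + 1 ∧
      i + 1 < qIdx s (T (i, 0) + 1) := by
  classical
  have hk := g_mem hsum hT hi
  obtain ⟨hk1, hk2⟩ := Finset.mem_Icc.mp hk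
  refine ⟨hk, ?_, ?_⟩
  · -- lower bound
    have hpre := prefix_eq hsum hT (T (i, 0) - 1) (by omega)
    have hnot : i ∉ (Finset.range n).filter (fun j => T (j, 0) ≤ T (i, 0) - 1) := by
      rw [Finset.mem_filter]
      rintro ⟨_, h⟩
      omega
    rw [hpre, Finset.mem_range] at hnot
    have hq : T (i, 0) - 1 + 1 = T (i, 0) := by omega
    rw [hq] at hnot
    have := qIdx_pos (s := s) (T (i, 0))
    omega
  · -- upper bound
    have hpre := prefix_eq hsum hT (T (i, 0)) hk2
    have hmem : i ∈ (Finset.range n).filter (fun j => T (j, 0) ≤ T (i, 0)) := by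
      rw [Finset.mem_filter, Finset.mem_range]
      exact ⟨hi, le_rfl⟩
    rw [hpre, Finset.mem_range] at hmem
    have := qIdx_pos (s := s) (T (i, 0) + 1)
    omega

lemma stdize_eq (hsum : ∑ k ∈ Finset.Icc 1 d, s k = n)
    (hT : T ∈ RSYTset d s (oneColumn n)) {i : ℕ} (hi : i < n) :
    stdize s (oneColumn n) T (i, 0) = i + 1 := by
  classical
  obtain ⟨hk, hb1, hb2⟩ := T_bounds hsum hT hi
  unfold stdize
  have hfilter : (oneColumn n).filter (fun c' => colReadLT c' (i, 0) ∧ T c' = T (i, 0))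
      = (Finset.Ico (qIdx s (T (i, 0)) - 1) i) ×ˢ ({0} : Finset ℕ) := by
    ext ⟨a, b⟩
    rw [Finset.mem_filter]
    simp only [oneColumn, colReadLT, Finset.mem_filter, Finset.mem_product, Finset.mem_range,
      Finset.mem_singleton, Finset.mem_Ico]
    constructor
    · rintro ⟨⟨han, rfl⟩, hcol, hTa⟩
      have ha_lt : a < i := by
        rcases hcol with h | h
        · omega
        · exact h.2
      obtain ⟨_, hab1, _⟩ := T_bounds hsum hT han
      rw [hTa] at hab1
      exact ⟨⟨by omega, ha_lt⟩, rfl⟩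
    · rintro ⟨⟨ha1, ha2⟩, rfl⟩
      have han : a < n := lt_trans ha2 hi
      obtain ⟨hak, hab1, hab2⟩ := T_bounds hsum hT han
      have h1 := qIdx_pos (s := s) (T (i, 0))
      have hTa : T (a, 0) = T (i, 0) :=
        blk_unique hak hk hab1 hab2 (by omega) (by omega)
      exact ⟨⟨han, rfl⟩, Or.inr ⟨rfl, ha2⟩, hTa⟩
  rw [hfilter, Finset.card_product, Finset.card_singleton, mul_one, Nat.card_Ico]
  have h1 := qIdx_pos (s := s) (T (i, 0))
  omega

lemma specht_eq (hsum : ∑ k ∈ Finset.Icc 1 d, s k = n)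
    (hT : T ∈ RSYTset d s (oneColumn n)) :
    spechtPoly (oneColumn n) (stdize s (oneColumn n) T) = fullVand n := by
  classical
  unfold spechtPoly fullVand
  refine Finset.prod_nbij (fun p => (p.2.1 + 1, p.1.1 + 1)) ?_ ?_ ?_ ?_
  · intro p hp
    simp only [Finset.mem_filter, Finset.mem_product, oneColumn, Finset.mem_range,
      Finset.mem_singleton] at hp
    simp only [Finset.mem_filter, Finset.mem_product, Finset.mem_Icc]
    obtain ⟨⟨⟨h11, h12⟩, h21, h22⟩, _, hlt⟩ := hp
    omega
  · intro p hp q hq hpq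
    simp only [Finset.coe_filter, Set.mem_setOf_eq, Finset.mem_product, oneColumn,
      Finset.mem_range, Finset.mem_singleton] at hp hq
    simp only [Prod.mk.injEq, Nat.add_right_cancel_iff] at hpq
    have e1 : p.1 = q.1 := Prod.ext hpq.2 (hp.1.1.2.trans hq.1.1.2.symm)
    have e2 : p.2 = q.2 := Prod.ext hpq.1 (hp.1.2.2.trans hq.1.2.2.symm)
    exact Prod.ext e1 e2
  · intro q hq
    simp only [Finset.coe_filter, Set.mem_setOf_eq, Finset.mem_product, Finset.mem_Icc] at hq
    obtain ⟨⟨⟨ha1, ha2⟩, hb1, hb2⟩, hlt⟩ := hq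
    refine ⟨((q.2 - 1, 0), (q.1 - 1, 0)), ?_, ?_⟩
    · simp only [Finset.coe_filter, Set.mem_setOf_eq, Finset.mem_product, oneColumn,
        Finset.mem_range, Finset.mem_singleton]
      exact ⟨⟨⟨by omega, trivial⟩, by omega, trivial⟩, trivial, by omega⟩
    · refine Prod.ext ?_ ?_
      · show q.1 - 1 + 1 = q.1
        omega
      · show q.2 - 1 + 1 = q.2
        omega
  · intro p hp
    simp only [Finset.mem_filter, Finset.mem_product, oneColumn, Finset.mem_range,
      Finset.mem_singleton] at hp
    obtain ⟨⟨⟨h11, h12⟩, h21, h22⟩, _, hlt⟩ := hp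
    have e1 : p.1 = (p.1.1, 0) := Prod.ext rfl h12
    have e2 : p.2 = (p.2.1, 0) := Prod.ext rfl h22
    rw [e1, e2, stdize_eq hsum hT h11, stdize_eq hsum hT h21]

end Tableau

lemma vandBlocks_ne_zero : vandBlocks d s ≠ 0 := by
  unfold vandBlocks
  rw [Finset.prod_ne_zero_iff]
  intro k _
  rw [Finset.prod_ne_zero_iff]
  intro q hq
  rw [Finset.mem_filter] at hq
  refine sub_ne_zero.mpr (fun h => ?_)
  exact absurd (MvPolynomial.X_injective h) (Nat.ne_of_gt hq.2)

lemma pAct_fullVand (hd : 0 < d) (hpos : ∀ k ∈ Finset.Icc 1 d, 0 < s k)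
    (hsum : ∑ k ∈ Finset.Icc 1 d, s k = n) :
    pAct n d s (fullVand n) = fullVand n := by
  classical
  unfold pAct
  have hterm : ∀ σ ∈ Finset.univ.filter (InBlocks n d s),
      (((Equiv.Perm.sign σ : ℤ) : ℂ)) • MvPolynomial.rename (extendPerm n σ) (fullVand n)
        = fullVand n := by
    intro σ _
    rw [rename_extendPerm_fullVand, smul_smul]
    have hs : (((Equiv.Perm.sign σ : ℤ) : ℂ)) * (((Equiv.Perm.sign σ : ℤ) : ℂ)) = 1 := by
      rcases Int.units_eq_one_or (Equiv.Perm.sign σ) with h | h <;> rw [h] <;> norm_num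
    rw [hs, one_smul]
  rw [Finset.sum_congr rfl hterm, Finset.sum_const, card_inBlocks hd hpos hsum]
  rw [← Nat.cast_smul_eq_nsmul ℂ, smul_smul, Nat.cast_prod]
  rw [inv_mul_cancel₀, one_smul]
  refine Finset.prod_ne_zero_iff.mpr (fun k _ => ?_)
  exact_mod_cast Nat.factorial_ne_zero (s k)

lemma exactQuot_eq {v f g : MvPolynomial ℕ ℂ} (hv : v ≠ 0) (h : f = v * g) :
    exactQuot v f = g := by
  unfold exactQuot
  have hex : ∃ g, f = v * g := ⟨g, h⟩
  rw [dif_pos hex]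
  have h2 := hex.choose_spec
  exact mul_left_cancel₀ hv (h2.symm.trans h)

end FSAux

/-- For `λ = (1^n)` and `T` the unique element of `RSYT^{(1^n)}_ς`, the
fused Specht polynomial is `𝓕_T = ∏_{1 ≤ i < j ≤ d} (x_j - x_i)^{s_i s_j}`.
Equivalently, if `Q` is the exact polynomial quotient of the full Vandermonde by `V_ς`,
then collapsing the blocks of variables turns `Q` into `∏_{i<j} (x_j - x_i)^{s_i s_j}`. -/
theorem fusedSpecht_oneColumn
    (n d : ℕ) (hn : 0 < n) (hd : 0 < d) (s : ℕ → ℕ)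
    (hpos : ∀ k ∈ Finset.Icc 1 d, 0 < s k)
    (hsum : ∑ k ∈ Finset.Icc 1 d, s k = n) :
    (∀ T ∈ RSYTset d s (oneColumn n),
      fusedSpecht n d s (oneColumn n) T
        = ∏ p ∈ ((Finset.Icc 1 d) ×ˢ (Finset.Icc 1 d)).filter (fun p => p.1 < p.2),
            (X p.2 - X p.1) ^ (s p.1 * s p.2)) ∧
    (∀ Q : MvPolynomial ℕ ℂ, vandBlocks d s * Q = fullVand n →
      MvPolynomial.rename (collapseVar d s) Q
        = ∏ p ∈ ((Finset.Icc 1 d) ×ˢ (Finset.Icc 1 d)).filter (fun p => p.1 < p.2),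
            (X p.2 - X p.1) ^ (s p.1 * s p.2)) := by
  have hfac := FSAux.fullVand_factor (s := s) hd hsum
  have hvne : vandBlocks d s ≠ 0 := FSAux.vandBlocks_ne_zero
  constructor
  · intro T hT
    unfold fusedSpecht
    rw [FSAux.specht_eq hsum hT, FSAux.pAct_fullVand hd hpos hsum,
      FSAux.exactQuot_eq hvne hfac, FSAux.rename_crossPoly]
  · intro Q hQ
    have hQ' : Q = FSAux.crossPoly d s := mul_left_cancel₀ hvne (hQ.trans hfac)
    rw [hQ', FSAux.rename_crossPoly]
end
end

section
/- Let λ be a partition of n whose Young diagram has at most two columns (λ_i ≤ 2 for all i) and let ς be a composition of n. Then the map T ↦ (|λ^T(1)|, …, |λ^T(d)|) from RSYT^λ_ς to ℤ^d is injective. -/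
open scoped Classical

noncomputable section

/-- `|λ^T(k)| = ∑_i (r_i^{T,ord}(k) - s_k + i - 1)
= (∑ row numbers of the boxes of T containing k) - s_k (s_k + 1)/2`. -/
def absLam (s : ℕ → ℕ) (cells : Finset (ℕ × ℕ)) (T : ℕ × ℕ → ℕ) (k : ℕ) : ℕ :=
  (∑ c ∈ cells.filter (fun c => T c = k), (c.1 + 1)) - s k * (s k + 1) / 2

/-! ### Auxiliary material -/

/-- The triangular number `1 + 2 + ⋯ + m`. -/
def tri (m : ℕ) : ℕ := ∑ i ∈ Finset.range m, (i+1)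

lemma tri_succ (m : ℕ) : tri (m+1) = tri m + (m+1) := Finset.sum_range_succ _ _

lemma tri_two_mul (m : ℕ) : 2 * tri m = m * (m+1) := by
  induction m with
  | zero => simp [tri]
  | succ m ih => rw [tri_succ]; ring_nf; ring_nf at ih; omega

lemma tri_eq (m : ℕ) : tri m = m * (m+1) / 2 := by
  have := tri_two_mul m; omega

lemma tri_add_le (a t : ℕ) : tri a + t*(a+1) ≤ tri (a+t) := by
  induction t with
  | zero => simp
  | succ t ih =>
    have h1 : a + (t+1) = (a+t) + 1 := by ring
    rw [h1, tri_succ]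
    nlinarith

lemma tri_le_add (b t : ℕ) : tri b ≤ tri (b - t) + t * b := by
  induction t with
  | zero => simp
  | succ t ih =>
    rcases le_or_gt b t with h | h
    · have : b - t = 0 := by omega
      have : b - (t+1) = 0 := by omega
      simp_all
      nlinarith
    · have h2 : b - t = (b - (t+1)) + 1 := by omega
      rw [h2, tri_succ] at ih
      have : (t+1)*b = t*b + b := by ring
      omega

lemma downset_eq_Iio (S : Finset ℕ) (h : ∀ a b : ℕ, a ≤ b → b ∈ S → a ∈ S) :
    S = Finset.Iio S.card := by
  have hsub : S ⊆ Finset.Iio S.card := by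
    intro a ha
    have hIic : Finset.Iic a ⊆ S := fun b hb => h b a (Finset.mem_Iic.mp hb) ha
    have := Finset.card_le_card hIic
    simp only [Nat.card_Iic] at this
    simpa using Nat.lt_of_lt_of_le (Nat.lt_succ_self a) this
  exact Finset.eq_of_subset_of_card_le hsub (by simp)

lemma tri_card_le_sum (R : Finset ℕ) : tri R.card ≤ ∑ r ∈ R, (r+1) := by
  induction R using Finset.strongInduction with
  | _ R ih =>
    rcases R.eq_empty_or_nonempty with rfl | hne
    · simp [tri]
    · have hm : R.max' hne ∈ R := R.max'_mem hne
      have hsum : ∑ r ∈ R.erase (R.max' hne), (r+1) + (R.max' hne + 1) = ∑ r ∈ R, (r+1) :=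
        Finset.sum_erase_add _ _ hm
      have hcard : (R.erase (R.max' hne)).card = R.card - 1 := Finset.card_erase_of_mem hm
      have hle : R.card ≤ R.max' hne + 1 := by
        have hsub : R ⊆ Finset.Iic (R.max' hne) := fun x hx => Finset.mem_Iic.mpr (R.le_max' x hx)
        simpa using Finset.card_le_card hsub
      have h1 := ih (R.erase (R.max' hne)) (Finset.erase_ssubset hm)
      rw [hcard] at h1
      have hc1 : 1 ≤ R.card := Finset.card_pos.mpr hne
      have h2 : tri R.card = tri (R.card - 1) + R.card := by
        obtain ⟨c, hc⟩ : ∃ c, R.card = c + 1 := ⟨R.card - 1, by omega⟩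
        rw [hc]; simp [tri_succ]
      omega

lemma tri_key (x x' y y' p : ℕ) (hsum : x + y = x' + y')
    (hyp : y ≤ p) (hyp' : y' ≤ p) (hx : p ≤ x) (hx' : p ≤ x')
    (htri : tri x + tri y = tri x' + tri y') : x = x' := by
  have main : ∀ a b c e : ℕ, a < b → a + c = b + e → c ≤ a → tri a + tri c < tri b + tri e := by
    intro a b c e hab heq hca
    obtain ⟨t, rfl⟩ : ∃ t, b = a + t := ⟨b - a, by omega⟩
    have ht : 1 ≤ t := by omega
    have hce : c = e + t := by omega
    have h1 : tri a + t*(a+1) ≤ tri (a+t) := tri_add_le a t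
    have h2 : tri c ≤ tri (c - t) + t * c := tri_le_add c t
    have h3 : c - t = e := by omega
    rw [h3] at h2
    have h4 : t*(a+1) = t*a + t := by ring
    have h5 : t * c ≤ t * a := Nat.mul_le_mul_left t hca
    omega
  rcases lt_trichotomy x x' with hlt | heq | hgt
  · exact absurd htri (Nat.ne_of_lt (main x x' y y' hlt hsum (le_trans hyp hx)))
  · exact heq
  · exact absurd htri.symm (Nat.ne_of_lt (main x' x y' y hgt hsum.symm (le_trans hyp' hx')))

/-- The number of cells in column `j` with entry at most `k`. -/
def colCount (cells : Finset (ℕ × ℕ)) (T : ℕ × ℕ → ℕ) (j k : ℕ) : ℕ :=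
  (cells.filter (fun c => c.2 = j ∧ T c ≤ k)).card

lemma mem_iff_lt_colCount (μ : YoungDiagram) (T : ℕ × ℕ → ℕ)
    (hcol : ∀ c ∈ μ.cells, ∀ c' ∈ μ.cells, c.2 = c'.2 → c.1 < c'.1 → T c ≤ T c')
    (j k i : ℕ) :
    ((i,j) ∈ μ.cells ∧ T (i,j) ≤ k) ↔ i < colCount μ.cells T j k := by
  set F := μ.cells.filter (fun c => c.2 = j ∧ T c ≤ k) with hF
  set S := F.image Prod.fst with hS
  have hmem : ∀ i : ℕ, i ∈ S ↔ ((i,j) ∈ μ.cells ∧ T (i,j) ≤ k) := by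
    intro i
    constructor
    · rintro hi
      obtain ⟨c, hc, rfl⟩ := Finset.mem_image.mp hi
      obtain ⟨hc1, hc2, hc3⟩ := Finset.mem_filter.mp hc
      have : c = (c.1, j) := by rw [← hc2]
      rw [this] at hc1 hc3
      exact ⟨hc1, hc3⟩
    · rintro ⟨h1, h2⟩
      exact Finset.mem_image.mpr ⟨(i,j), Finset.mem_filter.mpr ⟨h1, rfl, h2⟩, rfl⟩
  have hdc : ∀ a b : ℕ, a ≤ b → b ∈ S → a ∈ S := by
    intro a b hab hb
    obtain ⟨h1, h2⟩ := (hmem b).mp hb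
    rcases eq_or_lt_of_le hab with rfl | hlt
    · exact hb
    · have hm : (a, j) ∈ μ.cells := by
        rw [YoungDiagram.mem_cells] at h1 ⊢
        exact μ.up_left_mem hab le_rfl h1
      have := hcol (a,j) hm (b,j) h1 rfl hlt
      exact (hmem a).mpr ⟨hm, le_trans this h2⟩
  have hinj : Set.InjOn Prod.fst (F : Set (ℕ × ℕ)) := by
    intro c hc c' hc' hcc
    have h1 := (Finset.mem_filter.mp hc).2.1
    have h2 := (Finset.mem_filter.mp hc').2.1
    exact Prod.ext hcc (h1.trans h2.symm)
  have hcardS : S.card = colCount μ.cells T j k := by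
    rw [hS, Finset.card_image_of_injOn hinj]; rfl
  have hIio := downset_eq_Iio S hdc
  rw [← hmem i, ← hcardS]
  constructor
  · intro hi; exact Finset.mem_Iio.mp (hIio ▸ hi)
  · intro hi; rw [hIio]; exact Finset.mem_Iio.mpr hi

lemma values_mem_s9 (d n : ℕ) (s : ℕ → ℕ) (cells : Finset (ℕ × ℕ)) (T : ℕ × ℕ → ℕ)
    (hcard : cells.card = n) (hsum : ∑ k ∈ Finset.Icc 1 d, s k = n)
    (hcontent : HasContent d s cells T) :
    ∀ c ∈ cells, T c ∈ Finset.Icc 1 d := by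
  set U := (Finset.Icc 1 d).biUnion (fun k => cells.filter (fun c => T c = k)) with hU
  have hsub : U ⊆ cells := by
    intro c hc
    obtain ⟨k, _, hk⟩ := Finset.mem_biUnion.mp hc
    exact (Finset.mem_filter.mp hk).1
  have hdisj : ((Finset.Icc 1 d : Finset ℕ) : Set ℕ).PairwiseDisjoint
      (fun k => cells.filter (fun c => T c = k)) := by
    intro a _ b _ hab
    simp only [Function.onFun, Finset.disjoint_left]
    intro c hc hc'
    exact hab ((Finset.mem_filter.mp hc).2.symm.trans (Finset.mem_filter.mp hc').2)
  have hcardU : U.card = n := by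
    rw [hU, Finset.card_biUnion hdisj, ← hsum]
    exact Finset.sum_congr rfl (fun k hk => hcontent k hk)
  have hUeq : U = cells := Finset.eq_of_subset_of_card_le hsub (by omega)
  intro c hc
  rw [← hUeq] at hc
  obtain ⟨k, hk1, hk2⟩ := Finset.mem_biUnion.mp hc
  rw [(Finset.mem_filter.mp hk2).2]
  exact hk1

lemma filter_col_eq_image (μ : YoungDiagram) (T : ℕ × ℕ → ℕ)
    (hcol : ∀ c ∈ μ.cells, ∀ c' ∈ μ.cells, c.2 = c'.2 → c.1 < c'.1 → T c ≤ T c')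
    (j k : ℕ) :
    μ.cells.filter (fun c => c.2 = j ∧ T c ≤ k)
      = (Finset.range (colCount μ.cells T j k)).image (fun i => (i, j)) := by
  ext c
  simp only [Finset.mem_filter, Finset.mem_image, Finset.mem_range]
  constructor
  · rintro ⟨h1, h2, h3⟩
    refine ⟨c.1, ?_, ?_⟩
    · apply (mem_iff_lt_colCount μ T hcol j k c.1).mp
      have hc : c = (c.1, j) := by rw [← h2]
      rw [← hc]; exact ⟨h1, h3⟩
    · rw [← h2]
  · rintro ⟨i, hi, rfl⟩
    obtain ⟨h1, h2⟩ := (mem_iff_lt_colCount μ T hcol j k i).mpr hi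
    exact ⟨h1, rfl, h2⟩

lemma sum_col_eq_tri (μ : YoungDiagram) (T : ℕ × ℕ → ℕ)
    (hcol : ∀ c ∈ μ.cells, ∀ c' ∈ μ.cells, c.2 = c'.2 → c.1 < c'.1 → T c ≤ T c')
    (j k : ℕ) :
    ∑ c ∈ μ.cells.filter (fun c => c.2 = j ∧ T c ≤ k), (c.1 + 1)
      = tri (colCount μ.cells T j k) := by
  rw [filter_col_eq_image μ T hcol j k,
    Finset.sum_image (by intro a _ b _ hab; exact (Prod.ext_iff.mp hab).1)]
  rfl

lemma filter_le_split (μ : YoungDiagram) (h2col : ∀ c ∈ μ.cells, c.2 ≤ 1)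
    (T : ℕ × ℕ → ℕ) (k : ℕ) :
    μ.cells.filter (fun c => T c ≤ k)
      = μ.cells.filter (fun c => c.2 = 0 ∧ T c ≤ k) ∪ μ.cells.filter (fun c => c.2 = 1 ∧ T c ≤ k) := by
  ext c
  simp only [Finset.mem_filter, Finset.mem_union]
  constructor
  · rintro ⟨h1, h2⟩
    have := h2col c h1
    interval_cases h : c.2 <;> simp_all
  · rintro (⟨h1, _, h3⟩ | ⟨h1, _, h3⟩) <;> exact ⟨h1, h3⟩

lemma disj_cols (μ : YoungDiagram) (T : ℕ × ℕ → ℕ) (k : ℕ) :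
    Disjoint (μ.cells.filter (fun c => c.2 = 0 ∧ T c ≤ k))
      (μ.cells.filter (fun c => c.2 = 1 ∧ T c ≤ k)) := by
  rw [Finset.disjoint_left]
  intro c hc hc'
  have := (Finset.mem_filter.mp hc).2.1
  have := (Finset.mem_filter.mp hc').2.1
  omega

lemma sum_le_eq (μ : YoungDiagram) (h2col : ∀ c ∈ μ.cells, c.2 ≤ 1) (T : ℕ × ℕ → ℕ)
    (hcol : ∀ c ∈ μ.cells, ∀ c' ∈ μ.cells, c.2 = c'.2 → c.1 < c'.1 → T c ≤ T c')
    (k : ℕ) :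
    ∑ c ∈ μ.cells.filter (fun c => T c ≤ k), (c.1 + 1)
      = tri (colCount μ.cells T 0 k) + tri (colCount μ.cells T 1 k) := by
  rw [filter_le_split μ h2col T k, Finset.sum_union (disj_cols μ T k),
    sum_col_eq_tri μ T hcol 0 k, sum_col_eq_tri μ T hcol 1 k]

lemma card_le_eq (μ : YoungDiagram) (h2col : ∀ c ∈ μ.cells, c.2 ≤ 1) (T : ℕ × ℕ → ℕ) (k : ℕ) :
    (μ.cells.filter (fun c => T c ≤ k)).card
      = colCount μ.cells T 0 k + colCount μ.cells T 1 k := by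
  rw [filter_le_split μ h2col T k, Finset.card_union_of_disjoint (disj_cols μ T k)]
  rfl

lemma colCount_mono (cells : Finset (ℕ × ℕ)) (T : ℕ × ℕ → ℕ) (j k k' : ℕ) (h : k ≤ k') :
    colCount cells T j k ≤ colCount cells T j k' := by
  apply Finset.card_le_card
  intro c hc
  obtain ⟨h1, h2, h3⟩ := Finset.mem_filter.mp hc
  exact Finset.mem_filter.mpr ⟨h1, h2, h3.trans h⟩

lemma colCount_one_le (μ : YoungDiagram) (T : ℕ × ℕ → ℕ)
    (hrow : ∀ c ∈ μ.cells, ∀ c' ∈ μ.cells, c.1 = c'.1 → c.2 < c'.2 → T c < T c')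
    (hcol : ∀ c ∈ μ.cells, ∀ c' ∈ μ.cells, c.2 = c'.2 → c.1 < c'.1 → T c ≤ T c')
    (k : ℕ) :
    colCount μ.cells T 1 (k+1) ≤ colCount μ.cells T 0 k := by
  by_contra hcon
  push_neg at hcon
  obtain ⟨h1, h2⟩ := (mem_iff_lt_colCount μ T hcol 1 (k+1) (colCount μ.cells T 0 k)).mpr hcon
  set i := colCount μ.cells T 0 k
  have hm : (i, 0) ∈ μ.cells := by
    rw [YoungDiagram.mem_cells] at h1 ⊢
    exact μ.up_left_mem le_rfl (by omega) h1
  have hlt : T (i,0) < T (i,1) := hrow (i,0) hm (i,1) h1 rfl (by omega)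
  have : i < colCount μ.cells T 0 k :=
    (mem_iff_lt_colCount μ T hcol 0 k i).mp ⟨hm, by omega⟩
  omega

lemma filter_succ_split (cells : Finset (ℕ × ℕ)) (T : ℕ × ℕ → ℕ) (k : ℕ) :
    cells.filter (fun c => T c ≤ k+1)
      = cells.filter (fun c => T c ≤ k) ∪ cells.filter (fun c => T c = k+1) := by
  ext c
  simp only [Finset.mem_filter, Finset.mem_union]
  constructor
  · rintro ⟨h1, h2⟩
    rcases eq_or_lt_of_le h2 with hh | hh
    · exact Or.inr ⟨h1, hh⟩
    · exact Or.inl ⟨h1, by omega⟩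
  · rintro (⟨h1, h2⟩ | ⟨h1, h2⟩) <;> exact ⟨h1, by omega⟩

lemma disj_succ (cells : Finset (ℕ × ℕ)) (T : ℕ × ℕ → ℕ) (k : ℕ) :
    Disjoint (cells.filter (fun c => T c ≤ k)) (cells.filter (fun c => T c = k+1)) := by
  rw [Finset.disjoint_left]
  intro c hc hc'
  have := (Finset.mem_filter.mp hc).2
  have := (Finset.mem_filter.mp hc').2
  omega

lemma sum_row_ge (μ : YoungDiagram) (T : ℕ × ℕ → ℕ)
    (hrow : ∀ c ∈ μ.cells, ∀ c' ∈ μ.cells, c.1 = c'.1 → c.2 < c'.2 → T c < T c')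
    (k : ℕ) :
    tri ((μ.cells.filter (fun c => T c = k)).card)
      ≤ ∑ c ∈ μ.cells.filter (fun c => T c = k), (c.1 + 1) := by
  set F := μ.cells.filter (fun c => T c = k) with hF
  have hinj : ∀ c ∈ F, ∀ c' ∈ F, c.1 = c'.1 → c = c' := by
    intro c hc c' hc' hcc
    obtain ⟨h1, h2⟩ := Finset.mem_filter.mp hc
    obtain ⟨h1', h2'⟩ := Finset.mem_filter.mp hc'
    rcases lt_trichotomy c.2 c'.2 with hlt | heq | hgt
    · have := hrow c h1 c' h1' hcc hlt; omega
    · exact Prod.ext hcc heq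
    · have := hrow c' h1' c h1 hcc.symm hgt; omega
  have hcard : (F.image Prod.fst).card = F.card := Finset.card_image_of_injOn hinj
  have hsum : ∑ r ∈ F.image Prod.fst, (r+1) = ∑ c ∈ F, (c.1 + 1) :=
    Finset.sum_image hinj
  have := tri_card_le_sum (F.image Prod.fst)
  rw [hcard] at this
  omega

/-- For a Young diagram `μ` with at most two columns, the map
`T ↦ (|λ^T(1)|, …, |λ^T(d)|)` from `RSYT^λ_ς` is injective. -/
theorem absLam_injective_twoColumns
    (n d : ℕ) (hn : 0 < n) (hd : 0 < d) (s : ℕ → ℕ)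
    (hpos : ∀ k ∈ Finset.Icc 1 d, 0 < s k)
    (hsum : ∑ k ∈ Finset.Icc 1 d, s k = n)
    (μ : YoungDiagram) (hcard : μ.card = n)
    (h2col : ∀ c ∈ μ.cells, c.2 ≤ 1)
    (T : ℕ × ℕ → ℕ) (hT : T ∈ RSYTset d s μ.cells)
    (T' : ℕ × ℕ → ℕ) (hT' : T' ∈ RSYTset d s μ.cells)
    (h : ∀ k ∈ Finset.Icc 1 d, absLam s μ.cells T k = absLam s μ.cells T' k) :
    T = T' := by
  obtain ⟨⟨hrow, hcol⟩, hcontent, hzero⟩ := hT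
  obtain ⟨⟨hrow', hcol'⟩, hcontent', hzero'⟩ := hT'
  have hcardn : μ.cells.card = n := hcard
  have hval : ∀ c ∈ μ.cells, T c ∈ Finset.Icc 1 d :=
    values_mem_s9 d n s μ.cells T hcardn hsum hcontent
  have hval' : ∀ c ∈ μ.cells, T' c ∈ Finset.Icc 1 d :=
    values_mem_s9 d n s μ.cells T' hcardn hsum hcontent'
  have hge1 : ∀ c ∈ μ.cells, 1 ≤ T c := fun c hc => (Finset.mem_Icc.mp (hval c hc)).1
  have hge1' : ∀ c ∈ μ.cells, 1 ≤ T' c := fun c hc => (Finset.mem_Icc.mp (hval' c hc)).1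
  have hempty : ∀ (U : ℕ × ℕ → ℕ), (∀ c ∈ μ.cells, 1 ≤ U c) →
      μ.cells.filter (fun c => U c ≤ 0) = ∅ := by
    intro U hU
    rw [Finset.filter_eq_empty_iff]
    intro c hc
    have := hU c hc
    omega
  -- equality of the row sums for each value k
  have hS : ∀ k ∈ Finset.Icc 1 d,
      ∑ c ∈ μ.cells.filter (fun c => T c = k), (c.1+1)
        = ∑ c ∈ μ.cells.filter (fun c => T' c = k), (c.1+1) := by
    intro k hk
    have h1 := sum_row_ge μ T hrow k
    have h2 := sum_row_ge μ T' hrow' k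
    rw [hcontent k hk] at h1
    rw [hcontent' k hk] at h2
    have h3 := h k hk
    unfold absLam at h3
    rw [← tri_eq (s k)] at h3
    omega
  -- equality of the partial sums
  have hH : ∀ k, k ≤ d →
      ∑ c ∈ μ.cells.filter (fun c => T c ≤ k), (c.1+1)
        = ∑ c ∈ μ.cells.filter (fun c => T' c ≤ k), (c.1+1) := by
    intro k
    induction k with
    | zero => intro _; rw [hempty T hge1, hempty T' hge1']
    | succ k ih =>
      intro hk
      rw [filter_succ_split, filter_succ_split, Finset.sum_union (disj_succ _ _ _),
        Finset.sum_union (disj_succ _ _ _), ih (by omega),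
        hS (k+1) (Finset.mem_Icc.mpr ⟨by omega, hk⟩)]
  -- equality of the partial counts
  have hC : ∀ k, k ≤ d →
      (μ.cells.filter (fun c => T c ≤ k)).card = (μ.cells.filter (fun c => T' c ≤ k)).card := by
    intro k
    induction k with
    | zero => intro _; rw [hempty T hge1, hempty T' hge1']
    | succ k ih =>
      intro hk
      rw [filter_succ_split, filter_succ_split, Finset.card_union_of_disjoint (disj_succ _ _ _),
        Finset.card_union_of_disjoint (disj_succ _ _ _), ih (by omega),
        hcontent (k+1) (Finset.mem_Icc.mpr ⟨by omega, hk⟩),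
        hcontent' (k+1) (Finset.mem_Icc.mpr ⟨by omega, hk⟩)]
  have hzero0 : ∀ (U : ℕ × ℕ → ℕ), (∀ c ∈ μ.cells, 1 ≤ U c) → ∀ j, colCount μ.cells U j 0 = 0 := by
    intro U hU j
    unfold colCount
    rw [Finset.card_eq_zero, Finset.filter_eq_empty_iff]
    intro c hc
    rintro ⟨_, h2⟩
    have := hU c hc
    omega
  -- the main induction: the column counts agree
  have hN : ∀ k, k ≤ d → colCount μ.cells T 0 k = colCount μ.cells T' 0 k ∧
      colCount μ.cells T 1 k = colCount μ.cells T' 1 k := by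
    intro k
    induction k with
    | zero =>
      intro _
      rw [hzero0 T hge1 0, hzero0 T hge1 1, hzero0 T' hge1' 0, hzero0 T' hge1' 1]
      exact ⟨rfl, rfl⟩
    | succ k ih =>
      intro hk
      obtain ⟨ih0, ih1⟩ := ih (by omega)
      have hsumEq : colCount μ.cells T 0 (k+1) + colCount μ.cells T 1 (k+1)
          = colCount μ.cells T' 0 (k+1) + colCount μ.cells T' 1 (k+1) := by
        rw [← card_le_eq μ h2col T (k+1), ← card_le_eq μ h2col T' (k+1)]
        exact hC (k+1) hk
      have htriEq : tri (colCount μ.cells T 0 (k+1)) + tri (colCount μ.cells T 1 (k+1))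
          = tri (colCount μ.cells T' 0 (k+1)) + tri (colCount μ.cells T' 1 (k+1)) := by
        rw [← sum_le_eq μ h2col T hcol (k+1), ← sum_le_eq μ h2col T' hcol' (k+1)]
        exact hH (k+1) hk
      have h0 : colCount μ.cells T 0 (k+1) = colCount μ.cells T' 0 (k+1) := by
        refine tri_key _ _ _ _ (colCount μ.cells T 0 k) hsumEq
          (colCount_one_le μ T hrow hcol k) ?_
          (colCount_mono _ T 0 k (k+1) (by omega)) ?_ htriEq
        · rw [ih0]; exact colCount_one_le μ T' hrow' hcol' k
        · rw [ih0]; exact colCount_mono _ T' 0 k (k+1) (by omega)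
      exact ⟨h0, by omega⟩
  -- conclude pointwise
  funext c
  by_cases hc : c ∈ μ.cells
  · have hcv := Finset.mem_Icc.mp (hval c hc)
    have hcv' := Finset.mem_Icc.mp (hval' c hc)
    have hcol2 := h2col c hc
    have hNj : ∀ k, k ≤ d → colCount μ.cells T c.2 k = colCount μ.cells T' c.2 k := by
      intro k hk
      rcases Nat.le_one_iff_eq_zero_or_eq_one.mp hcol2 with hj | hj
      · rw [hj]; exact (hN k hk).1
      · rw [hj]; exact (hN k hk).2
    have hmc : ((c.1, c.2) : ℕ × ℕ) = c := rfl
    have key : ∀ k, k ≤ d → (T c ≤ k ↔ T' c ≤ k) := by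
      intro k hk
      constructor
      · intro hle
        have h1 : c.1 < colCount μ.cells T c.2 k :=
          (mem_iff_lt_colCount μ T hcol c.2 k c.1).mp (by rw [hmc]; exact ⟨hc, hle⟩)
        rw [hNj k hk] at h1
        have h2 := (mem_iff_lt_colCount μ T' hcol' c.2 k c.1).mpr h1
        rw [hmc] at h2
        exact h2.2
      · intro hle
        have h1 : c.1 < colCount μ.cells T' c.2 k :=
          (mem_iff_lt_colCount μ T' hcol' c.2 k c.1).mp (by rw [hmc]; exact ⟨hc, hle⟩)
        rw [← hNj k hk] at h1
        have h2 := (mem_iff_lt_colCount μ T hcol c.2 k c.1).mpr h1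
        rw [hmc] at h2
        exact h2.2
    have h1 := (key (T c) (by omega)).mp le_rfl
    have h2 := (key (T' c) (by omega)).mpr le_rfl
    omega
  · rw [hzero c hc, hzero' c hc]
end
end

section
/- Let ς = (s_1,…,s_d) be a composition of 2N and let φ be a Möbius transformation of the upper half-plane with φ(x_1) < ⋯ < φ(x_d) for a given x ∈ 𝔛_d. Then ∏_{1≤i<j≤d} (φ(x_j) − φ(x_i))^{−s_i s_j/2} = ∏_{i=1}^d φ'(x_i)^{s_i(s_i − 2N)/4} × ∏_{1≤i<j≤d} (x_j − x_i)^{−s_i s_j/2}. -/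
noncomputable section

private lemma rpow_finset_sum {x : ℝ} (hx : 0 < x) {ι : Type*} (t : Finset ι) (f : ι → ℝ) :
    x ^ (∑ i ∈ t, f i) = ∏ i ∈ t, x ^ f i := by
  induction t using Finset.cons_induction with
  | empty => simp
  | cons i t hi ih => rw [Finset.sum_cons, Finset.prod_cons, Real.rpow_add hx, ih]


/-- For a composition `ς = (s_1, …, s_d)` of `2N` and a Möbius
transformation `φ(t) = (a t + b)/(c t + e)` of the upper half-plane (`ae - bc > 0`)
with `φ(x_1) < ⋯ < φ(x_d)`,
`∏_{1≤i<j≤d} (φ(x_j) - φ(x_i))^{-s_i s_j/2}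
  = ∏_{i=1}^d φ'(x_i)^{s_i(s_i - 2N)/4} · ∏_{1≤i<j≤d} (x_j - x_i)^{-s_i s_j/2}`. -/
theorem mobius_prefactor_covariance
    (N d : ℕ) (hN : 0 < N) (hd : 0 < d) (s : ℕ → ℕ)
    (hpos : ∀ k ∈ Finset.Icc 1 d, 0 < s k)
    (hsum : ∑ k ∈ Finset.Icc 1 d, s k = 2 * N)
    (a b c e : ℝ) (hdet : b * c < a * e)
    (x : Fin d → ℝ) (hx : StrictMono x)
    (hpole : ∀ i, c * x i + e ≠ 0)
    (hord : StrictMono fun i => (a * x i + b) / (c * x i + e)) :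
    (∏ p ∈ Finset.univ.filter (fun p : Fin d × Fin d => p.1 < p.2),
        ((a * x p.2 + b) / (c * x p.2 + e) - (a * x p.1 + b) / (c * x p.1 + e)) ^
          (-(((s ((p.1 : ℕ) + 1) * s ((p.2 : ℕ) + 1) : ℕ) : ℝ)) / 2))
      = (∏ i : Fin d,
          ((a * e - b * c) / (c * x i + e) ^ 2) ^
            (((s ((i : ℕ) + 1) : ℝ) * ((s ((i : ℕ) + 1) : ℝ) - 2 * (N : ℝ))) / 4)) *
        ∏ p ∈ Finset.univ.filter (fun p : Fin d × Fin d => p.1 < p.2),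
          (x p.2 - x p.1) ^
            (-(((s ((p.1 : ℕ) + 1) * s ((p.2 : ℕ) + 1) : ℕ) : ℝ)) / 2) := by
  -- notation
  set D : Fin d → ℝ := fun i => (a * e - b * c) / (c * x i + e) ^ 2 with hDdef
  have hD : ∀ i, 0 < D i := fun i =>
    div_pos (by linarith) (pow_pos (abs_pos.mpr (hpole i)) 2 |>.trans_eq (by rw [sq_abs]))
  set α : Fin d × Fin d → ℝ :=
    fun p => (-(((s ((p.1 : ℕ) + 1) * s ((p.2 : ℕ) + 1) : ℕ) : ℝ)) / 2) with hαdef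
  -- total sum of s over Fin d
  have hnat : ∑ i : Fin d, s ((i : ℕ) + 1) = 2 * N := by
    rw [Fin.sum_univ_eq_sum_range (fun i => s (i + 1)) d, ← hsum, ← Finset.Ico_add_one_right_eq_Icc,
      Finset.sum_Ico_eq_sum_range]
    simp [Nat.add_comm]
  have htot : ∑ i : Fin d, ((s ((i : ℕ) + 1) : ℝ)) = 2 * N := by
    rw [← Nat.cast_sum]
    exact_mod_cast congrArg (Nat.cast : ℕ → ℝ) hnat
  -- key pointwise identity
  have key : ∀ p : Fin d × Fin d, p.1 < p.2 →
      (a * x p.2 + b) / (c * x p.2 + e) - (a * x p.1 + b) / (c * x p.1 + e)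
        = (x p.2 - x p.1) * Real.sqrt (D p.1 * D p.2) := by
    rintro ⟨i, j⟩ hij
    simp only at hij ⊢
    have hsub : (a * x j + b) / (c * x j + e) - (a * x i + b) / (c * x i + e)
        = ((a * e - b * c) * (x j - x i)) / ((c * x i + e) * (c * x j + e)) := by
      rw [div_sub_div _ _ (hpole j) (hpole i)]
      congr 1 <;> ring
    have hxd : 0 < x j - x i := sub_pos.mpr (hx hij)
    have hden : 0 < (c * x i + e) * (c * x j + e) := by
      have h1 : 0 < (a * x j + b) / (c * x j + e) - (a * x i + b) / (c * x i + e) :=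
        sub_pos.mpr (hord hij)
      rw [hsub] at h1
      rcases (mul_ne_zero (hpole i) (hpole j)).lt_or_gt with hlt | hlt
      · exfalso
        have := div_neg_of_pos_of_neg (by nlinarith : 0 < (a * e - b * c) * (x j - x i)) hlt
        linarith
      · exact hlt
    have hsq : D i * D j = ((a * e - b * c) / ((c * x i + e) * (c * x j + e))) ^ 2 := by
      simp only [hDdef]
      rw [div_mul_div_comm, ← mul_pow, ← sq, ← div_pow]
    rw [hsub, hsq, Real.sqrt_sq (le_of_lt (div_pos (by linarith) hden))]
    ring
  -- rewrite each factor
  have step1 : (∏ p ∈ Finset.univ.filter (fun p : Fin d × Fin d => p.1 < p.2),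
        ((a * x p.2 + b) / (c * x p.2 + e) - (a * x p.1 + b) / (c * x p.1 + e)) ^ α p)
      = (∏ p ∈ Finset.univ.filter (fun p : Fin d × Fin d => p.1 < p.2),
          (x p.2 - x p.1) ^ α p)
        * ((∏ p ∈ Finset.univ.filter (fun p : Fin d × Fin d => p.1 < p.2),
            D p.1 ^ (α p / 2))
          * (∏ p ∈ Finset.univ.filter (fun p : Fin d × Fin d => p.1 < p.2),
            D p.2 ^ (α p / 2))) := by
    rw [← Finset.prod_mul_distrib, ← Finset.prod_mul_distrib]
    refine Finset.prod_congr rfl ?_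
    intro p hp
    have hp' : p.1 < p.2 := (Finset.mem_filter.mp hp).2
    have hxd : (0:ℝ) ≤ x p.2 - x p.1 := le_of_lt (sub_pos.mpr (hx hp'))
    have hDD : (0:ℝ) < D p.1 * D p.2 := mul_pos (hD p.1) (hD p.2)
    rw [key p hp', Real.mul_rpow hxd (Real.sqrt_nonneg _), Real.sqrt_eq_rpow,
      ← Real.rpow_mul hDD.le, show (1/2 : ℝ) * α p = α p / 2 by ring,
      Real.mul_rpow (hD p.1).le (hD p.2).le]
  -- symmetry of α
  have hsymm : ∀ i j : Fin d, α (j, i) = α (i, j) := by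
    intro i j; simp only [hαdef]; rw [Nat.mul_comm]
  -- reindex the first D-product via swap
  have swap1 : (∏ p ∈ Finset.univ.filter (fun p : Fin d × Fin d => p.1 < p.2),
        D p.1 ^ (α p / 2))
      = ∏ p ∈ Finset.univ.filter (fun p : Fin d × Fin d => p.2 < p.1),
        D p.2 ^ (α p / 2) := by
    refine Finset.prod_nbij' Prod.swap Prod.swap ?_ ?_ ?_ ?_ ?_
    · intro p hp
      simp only [Finset.mem_filter, Finset.mem_univ, true_and] at hp ⊢
      exact hp
    · intro p hp
      simp only [Finset.mem_filter, Finset.mem_univ, true_and] at hp ⊢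
      exact hp
    · intro p _; exact Prod.swap_swap p
    · intro p _; exact Prod.swap_swap p
    · rintro ⟨i, j⟩ _
      simp only [Prod.swap_prod_mk]
      rw [hsymm]
  -- the two half-products combine into a product over distinct pairs
  have hdisj : Disjoint
      (Finset.univ.filter (fun p : Fin d × Fin d => p.2 < p.1))
      (Finset.univ.filter (fun p : Fin d × Fin d => p.1 < p.2)) := by
    rw [Finset.disjoint_left]
    intro p h1 h2
    simp only [Finset.mem_filter, Finset.mem_univ, true_and] at h1 h2
    exact absurd h2 (asymm h1)
  have hsplit : (Finset.univ.filter (fun p : Fin d × Fin d => p.2 < p.1)) ∪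
      (Finset.univ.filter (fun p : Fin d × Fin d => p.1 < p.2))
      = Finset.univ.filter (fun p : Fin d × Fin d => p.1 ≠ p.2) := by
    rw [← Finset.filter_or]
    apply Finset.filter_congr
    intro p _
    rw [ne_iff_lt_or_gt]
    exact or_comm
  -- exponent sums
  have inner : ∀ j : Fin d, ∑ i ∈ Finset.univ.filter (fun i : Fin d => i ≠ j), (α (i, j) / 2)
      = ((s ((j : ℕ) + 1) : ℝ) * ((s ((j : ℕ) + 1) : ℝ) - 2 * (N : ℝ))) / 4 := by
    intro j
    have hs : ∑ i ∈ Finset.univ.filter (fun i : Fin d => i ≠ j), ((s ((i : ℕ) + 1) : ℝ))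
        = 2 * N - s ((j : ℕ) + 1) := by
      rw [Finset.filter_ne']
      have h := Finset.sum_erase_add Finset.univ
        (fun i : Fin d => ((s ((i : ℕ) + 1) : ℝ))) (Finset.mem_univ j)
      rw [htot] at h
      linarith
    calc ∑ i ∈ Finset.univ.filter (fun i : Fin d => i ≠ j), (α (i, j) / 2)
        = ∑ i ∈ Finset.univ.filter (fun i : Fin d => i ≠ j),
            ((s ((i : ℕ) + 1) : ℝ)) * (-(s ((j : ℕ) + 1) : ℝ) / 4) := by
          refine Finset.sum_congr rfl fun i _ => ?_
          simp only [hαdef]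
          push_cast
          ring
      _ = (∑ i ∈ Finset.univ.filter (fun i : Fin d => i ≠ j), ((s ((i : ℕ) + 1) : ℝ)))
            * (-(s ((j : ℕ) + 1) : ℝ) / 4) := by rw [← Finset.sum_mul]
      _ = _ := by rw [hs]; ring
  have step2 : (∏ p ∈ Finset.univ.filter (fun p : Fin d × Fin d => p.1 < p.2),
        D p.1 ^ (α p / 2))
      * (∏ p ∈ Finset.univ.filter (fun p : Fin d × Fin d => p.1 < p.2),
        D p.2 ^ (α p / 2))
      = ∏ j : Fin d, D j ^ (((s ((j : ℕ) + 1) : ℝ) * ((s ((j : ℕ) + 1) : ℝ) - 2 * (N : ℝ))) / 4) := by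
    rw [swap1, ← Finset.prod_union hdisj, hsplit, Finset.prod_filter,
      Fintype.prod_prod_type, Finset.prod_comm]
    refine Finset.prod_congr rfl fun j _ => ?_
    have : ∀ i : Fin d, (if (i, j).1 ≠ (i, j).2 then D (i, j).2 ^ (α (i, j) / 2) else 1)
        = (if i ≠ j then D j ^ (α (i, j) / 2) else 1) := fun i => rfl
    simp only [this]
    rw [← Finset.prod_filter, ← rpow_finset_sum (hD j), inner j]
  rw [step1, step2, mul_comm]
end
end
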